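/- arXiv:2306.09727 — 5 statements merged into one kernel-verified Lean document; each statement's English description precedes it below -/
import Mathlib

section
/- Let $R$ be a commutative ring, $I \leq R$ a nilpotent ideal, and $M$ an $R$-module such that $M/IM$ is flat as an $R/I$-module and the natural map $I \otimes_R M \to IM$ is injective. Then $M$ is a flat $R$-module. -/
open TensorProduct LinearMap

section Aux
variable {R : Type*} [CommRing R] {M : Type*} [AddCommGroup M] [Module R M]

lemma aux_extend_from_I (I : Ideal R)
    (hinj : Function.Injective
      (TensorProduct.lift ((LinearMap.lsmul R M).comp I.subtype) : I ⊗[R] M →ₗ[R] M))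
    (g : I →ₗ[R] CharacterModule M) :
    ∃ c : CharacterModule M, ∀ (x : R) (hx : x ∈ I), g ⟨x, hx⟩ = x • c := by
  obtain ⟨c, hc⟩ := CharacterModule.dual_surjective_of_injective _ hinj
    (CharacterModule.uncurry g)
  refine ⟨c, fun x hx => ?_⟩
  ext m
  have h2 := congr_fun (congr_arg (fun φ : CharacterModule (I ⊗[R] M) => ⇑φ) hc)
    ((⟨x, hx⟩ : I) ⊗ₜ m)
  simp only [CharacterModule.dual_apply, AddMonoidHom.coe_comp, Function.comp_apply,
    LinearMap.toAddMonoidHom_coe, TensorProduct.lift.tmul, LinearMap.coe_comp,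
    Submodule.coe_subtype, LinearMap.lsmul_apply, CharacterModule.uncurry_apply,
    TensorProduct.liftAddHom_tmul] at h2
  rw [CharacterModule.smul_apply]
  exact h2.symm


lemma aux_extend_torsion (I : Ideal R)
    (hflat : Module.Flat (R ⧸ I) (M ⧸ (I • (⊤ : Submodule R M))))
    {X Y : Type*} [AddCommGroup X] [Module R X] [AddCommGroup Y] [Module R Y]
    (hX : Module.IsTorsionBySet R X I) (hY : Module.IsTorsionBySet R Y I)
    (j : X →ₗ[R] Y) (hj : Function.Injective j) (ξ : X →ₗ[R] CharacterModule M) :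
    ∃ Θ : Y →ₗ[R] CharacterModule M, ∀ x, Θ (j x) = ξ x := by
  letI : Module (R ⧸ I) X := hX.module
  letI : Module (R ⧸ I) Y := hY.module
  haveI := hflat
  set Mbar := M ⧸ (I • (⊤ : Submodule R M)) with hMbar
  let j' : X →ₗ[R ⧸ I] Y :=
    { toFun := j, map_add' := j.map_add, map_smul' := by
        rintro r x
        obtain ⟨r, rfl⟩ := Ideal.Quotient.mk_surjective r
        exact j.map_smul r x }
  have hkill : ∀ (x : X) (m : M), m ∈ (I • (⊤ : Submodule R M)) → ξ x m = 0 := by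
    intro x m hm
    refine Submodule.smul_induction_on hm (fun r hr n _ => ?_) (fun a b ha hb => ?_)
    · have h1 : ξ x (r • n) = (r • ξ x) n := rfl
      rw [h1, ← ξ.map_smul, hX (a := ⟨r, hr⟩), ξ.map_zero]
      rfl
    · rw [map_add (ξ x), ha, hb, add_zero]
  let ξd : X → CharacterModule Mbar := fun x =>
    QuotientAddGroup.lift (I • (⊤ : Submodule R M)).toAddSubgroup (ξ x)
      (fun m hm => hkill x m hm)
  have hξd : ∀ (x : X) (m : M), ξd x (Submodule.Quotient.mk m) = ξ x m := fun _ _ => rfl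
  let ξ' : X →ₗ[R ⧸ I] CharacterModule Mbar :=
    { toFun := ξd
      map_add' := by
        intro a b
        ext z
        obtain ⟨m, rfl⟩ := Submodule.Quotient.mk_surjective _ z
        show ξ (a + b) m = ξd a _ + ξd b _
        rw [ξ.map_add]; rfl
      map_smul' := by
        intro r x
        obtain ⟨r, rfl⟩ := Ideal.Quotient.mk_surjective r
        ext z
        obtain ⟨m, rfl⟩ := Submodule.Quotient.mk_surjective _ z
        show ξ (Ideal.Quotient.mk I r • x) m
          = ξd x (Ideal.Quotient.mk I r • Submodule.Quotient.mk m)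
        rw [hX.mk_smul, ξ.map_smul, Module.Quotient.mk_smul_mk]
        exact (hξd x (r • m)).symm }
  have hrT : Function.Injective (j'.rTensor Mbar) :=
    Module.Flat.rTensor_preserves_injective_linearMap j' hj
  obtain ⟨χ', hχ'⟩ := CharacterModule.dual_surjective_of_injective _ hrT
    (CharacterModule.uncurry ξ')
  let Θ' : Y →ₗ[R ⧸ I] CharacterModule Mbar := CharacterModule.curry χ'
  let mkQh : M →+ Mbar := (Submodule.mkQ _).toAddMonoidHom
  refine ⟨{ toFun := fun y => (Θ' y).comp mkQh
            map_add' := by intro a b; ext m; show (Θ' (a + b)) (Submodule.Quotient.mk m) = _; rw [Θ'.map_add]; rfl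
            map_smul' := by
              intro r y
              ext m
              show (Θ' (r • y)) (Submodule.Quotient.mk m) = (Θ' y) (Submodule.Quotient.mk (r • m))
              have h1 : r • y = (Ideal.Quotient.mk I r) • y := (hY.mk_smul r y).symm
              rw [h1, Θ'.map_smul, CharacterModule.smul_apply, Module.Quotient.mk_smul_mk] },
    fun x => ?_⟩
  ext m
  show (Θ' (j x)) (Submodule.Quotient.mk m) = ξ x m
  have h2 := congr_fun (congr_arg (fun φ : CharacterModule (X ⊗[R ⧸ I] Mbar) => ⇑φ) hχ')
    (x ⊗ₜ Submodule.Quotient.mk m)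
  simp only [CharacterModule.dual_apply, AddMonoidHom.coe_comp, Function.comp_apply,
    LinearMap.toAddMonoidHom_coe, LinearMap.rTensor_tmul,
    CharacterModule.uncurry_apply, TensorProduct.liftAddHom_tmul] at h2
  have h3 : (Θ' (j x)) (Submodule.Quotient.mk m)
      = χ' ((j' x) ⊗ₜ Submodule.Quotient.mk m) := rfl
  rw [h3]
  have h4 : j' x = j x := rfl
  rw [← hξd x m]
  exact h2

lemma aux_stage2 (I : Ideal R)
    (hflat : Module.Flat (R ⧸ I) (M ⧸ (I • (⊤ : Submodule R M))))
    {F : Type*} [AddCommGroup F] [Module R F]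
    (N' : Submodule R F) (hN' : (I • ⊤ : Submodule R F) ≤ N')
    (η : F →ₗ[R] CharacterModule M) (ξ : N' →ₗ[R] CharacterModule M)
    (hcompat : ∀ (f : F) (hf : f ∈ (I • ⊤ : Submodule R F)), η f = ξ ⟨f, hN' hf⟩) :
    ∃ H : F →ₗ[R] CharacterModule M, ∀ (f : F) (hf : f ∈ N'), H f = ξ ⟨f, hf⟩ := by
  let ζ : N' →ₗ[R] CharacterModule M := ξ - η.comp N'.subtype
  let K : Submodule R N' := (I • (⊤ : Submodule R F)).comap N'.subtype
  have hζK : K ≤ LinearMap.ker ζ := by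
    intro x hx
    have h4 : η x.1 = ξ x := by
      have := hcompat x.1 hx
      rwa [Subtype.coe_eta] at this
    simp only [LinearMap.mem_ker, ζ, LinearMap.sub_apply, LinearMap.coe_comp,
      Function.comp_apply, Submodule.coe_subtype, K]
    rw [h4, sub_self]
  let ξbar : (↥N' ⧸ K) →ₗ[R] CharacterModule M := Submodule.liftQ K ζ hζK
  let jq : (↥N' ⧸ K) →ₗ[R] (F ⧸ (I • ⊤ : Submodule R F)) :=
    Submodule.mapQ K (I • ⊤) N'.subtype (fun x hx => hx)
  have hjq : Function.Injective jq := by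
    intro a b hab
    obtain ⟨u, rfl⟩ := Submodule.Quotient.mk_surjective _ a
    obtain ⟨v, rfl⟩ := Submodule.Quotient.mk_surjective _ b
    rw [Submodule.mapQ_apply, Submodule.mapQ_apply, Submodule.Quotient.eq] at hab
    exact (Submodule.Quotient.eq K).mpr hab
  have hX : Module.IsTorsionBySet R (↥N' ⧸ K) I := by
    intro x a
    obtain ⟨u, rfl⟩ := Submodule.Quotient.mk_surjective _ x
    rw [← Submodule.Quotient.mk_smul, Submodule.Quotient.mk_eq_zero]
    exact Submodule.smul_mem_smul a.2 Submodule.mem_top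
  have hY : Module.IsTorsionBySet R (F ⧸ (I • ⊤ : Submodule R F)) I :=
    Module.isTorsionBySet_quotient_ideal_smul _ _
  obtain ⟨Θ, hΘ⟩ := aux_extend_torsion I hflat hX hY jq hjq ξbar
  refine ⟨η + Θ.comp (Submodule.mkQ _), fun f hf => ?_⟩
  have h5 : (Submodule.mkQ (I • ⊤ : Submodule R F)) f
      = jq (Submodule.Quotient.mk (⟨f, hf⟩ : N')) := by
    rw [Submodule.mapQ_apply]
    rfl
  have h6 : Θ ((Submodule.mkQ (I • ⊤ : Submodule R F)) f)
      = ξbar (Submodule.Quotient.mk (⟨f, hf⟩ : N')) := by rw [h5]; exact hΘ _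
  have h7 : ξbar (Submodule.Quotient.mk (⟨f, hf⟩ : N')) = ζ ⟨f, hf⟩ :=
    Submodule.liftQ_apply _ _ _
  simp only [LinearMap.add_apply, LinearMap.coe_comp, Function.comp_apply]
  rw [h6, h7]
  simp only [ζ, LinearMap.sub_apply, LinearMap.coe_comp, Function.comp_apply,
    Submodule.coe_subtype]
  abel

lemma aux_ext_free (I : Ideal R)
    (hflat : Module.Flat (R ⧸ I) (M ⧸ (I • (⊤ : Submodule R M))))
    (hinj : Function.Injective
      (TensorProduct.lift ((LinearMap.lsmul R M).comp I.subtype) : I ⊗[R] M →ₗ[R] M))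
    {S : Type*} (N' : Submodule R (S →₀ R)) (hN' : (I • ⊤ : Submodule R (S →₀ R)) ≤ N')
    (ξ : N' →ₗ[R] CharacterModule M) :
    ∃ H : (S →₀ R) →ₗ[R] CharacterModule M, ∀ (f : S →₀ R) (hf : f ∈ N'), H f = ξ ⟨f, hf⟩ := by
  classical
  have hmem : ∀ (s : S) (x : R), x ∈ I → Finsupp.single s x ∈ N' := by
    intro s x hx
    apply hN'
    have h1 : Finsupp.single s x = x • Finsupp.single s (1 : R) := by
      rw [Finsupp.smul_single, smul_eq_mul, mul_one]
    rw [h1]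
    exact Submodule.smul_mem_smul hx Submodule.mem_top
  choose c hc using fun s : S => aux_extend_from_I I hinj
    (ξ.comp (LinearMap.codRestrict N' ((Finsupp.lsingle s).comp I.subtype)
      (fun x => hmem s x.1 x.2)))
  let η : (S →₀ R) →ₗ[R] CharacterModule M := Finsupp.linearCombination R c
  have claim1 : ∀ (f : S →₀ R) (hf : f ∈ (I • ⊤ : Submodule R (S →₀ R))),
      η f = ξ ⟨f, hN' hf⟩ := by
    intro f hf
    refine Submodule.smul_induction_on' hf ?_ ?_
    · intro r hr g _
      have hmaps : η.comp (LinearMap.lsmul R (S →₀ R) r)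
          = ξ.comp (LinearMap.codRestrict N' (LinearMap.lsmul R (S →₀ R) r)
              (fun g => hN' (Submodule.smul_mem_smul hr Submodule.mem_top))) := by
        refine Finsupp.lhom_ext fun s x => ?_
        have e1 : (LinearMap.lsmul R (S →₀ R) r) (Finsupp.single s x)
            = Finsupp.single s (r * x) := by
          rw [LinearMap.lsmul_apply, Finsupp.smul_single, smul_eq_mul]
        have e2 : (LinearMap.codRestrict N' (LinearMap.lsmul R (S →₀ R) r)
              (fun g => hN' (Submodule.smul_mem_smul hr Submodule.mem_top)))
              (Finsupp.single s x)
            = ⟨Finsupp.single s (r * x), hmem s _ (I.mul_mem_right x hr)⟩ :=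
          Subtype.ext (by rw [LinearMap.codRestrict_apply]; exact e1)
        rw [LinearMap.comp_apply, LinearMap.comp_apply, e1, e2]
        have h3 : η (Finsupp.single s (r * x)) = (r * x) • c s :=
          Finsupp.linearCombination_single _ _ _
        exact h3.trans (hc s (r * x) (I.mul_mem_right x hr)).symm
      exact LinearMap.congr_fun hmaps g
    · intro a ha b hb iha ihb
      have h3 : (⟨a + b, hN' (Submodule.add_mem _ ha hb)⟩ : N')
          = ⟨a, hN' ha⟩ + ⟨b, hN' hb⟩ := rfl
      rw [map_add, iha, ihb, h3, map_add]
  exact aux_stage2 I hflat N' hN' η ξ claim1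

lemma aux_step (I : Ideal R)
    (hflat : Module.Flat (R ⧸ I) (M ⧸ (I • (⊤ : Submodule R M))))
    (hinj : Function.Injective
      (TensorProduct.lift ((LinearMap.lsmul R M).comp I.subtype) : I ⊗[R] M →ₗ[R] M))
    (A B : Ideal R) (hAB : A ≤ B) (hIB : ∀ i ∈ I, ∀ b ∈ B, i * b ∈ A)
    (g : A →ₗ[R] CharacterModule M) :
    ∃ h : B →ₗ[R] CharacterModule M,
      ∀ (x : R) (hx : x ∈ A), h ⟨x, hAB hx⟩ = g ⟨x, hx⟩ := by
  classical
  let π : (↥B →₀ R) →ₗ[R] ↥B := Finsupp.linearCombination R (fun b : ↥B => b)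
  have hπs : ∀ b : ↥B, π (Finsupp.single b 1) = b := by
    intro b
    rw [Finsupp.linearCombination_single, one_smul]
  let A' : Submodule R ↥B := Submodule.comap B.subtype A
  let N' : Submodule R (↥B →₀ R) := A'.comap π
  have keyA : ∀ y ∈ (I • ⊤ : Submodule R ↥B), (y : R) ∈ A := by
    intro y hy
    refine Submodule.smul_induction_on hy (fun r hr n _ => ?_) (fun a b ha hb => ?_)
    · have h1 : ((r • n : ↥B) : R) = r * (n : R) := rfl
      rw [h1]
      exact hIB r hr n n.2
    · rw [Submodule.coe_add]
      exact A.add_mem ha hb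
  have hN' : (I • ⊤ : Submodule R (↥B →₀ R)) ≤ N' := by
    intro f hf
    have h1 : π f ∈ (I • ⊤ : Submodule R ↥B) := by
      refine Submodule.smul_induction_on hf (fun r hr x _ => ?_) (fun a b ha hb => ?_)
      · rw [map_smul]
        exact Submodule.smul_mem_smul hr Submodule.mem_top
      · rw [map_add]
        exact Submodule.add_mem _ ha hb
    exact Submodule.mem_comap.mpr (Submodule.mem_comap.mpr (keyA _ h1))
  let μ : N' →ₗ[R] ↥A :=
    LinearMap.codRestrict A ((B.subtype.comp π).comp N'.subtype)
      (fun x => Submodule.mem_comap.mp (Submodule.mem_comap.mp x.2))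
  obtain ⟨H, hH⟩ := aux_ext_free I hflat hinj N' hN' (g.comp μ)
  have hker : ∀ x ∈ LinearMap.ker π, H x = 0 := by
    intro x hx
    have hx0 : π x = 0 := LinearMap.mem_ker.mp hx
    have hxN : x ∈ N' := by
      refine Submodule.mem_comap.mpr (Submodule.mem_comap.mpr ?_)
      show ((π x : ↥B) : R) ∈ A
      rw [hx0]
      exact A.zero_mem
    rw [hH x hxN]
    have hμ : μ ⟨x, hxN⟩ = 0 := Subtype.ext (by
      show ((π x : ↥B) : R) = 0
      rw [hx0]; rfl)
    show g (μ ⟨x, hxN⟩) = 0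
    rw [hμ, map_zero]
  have hdiff : ∀ u v : ↥B →₀ R, π u = π v → H u = H v := by
    intro u v huv
    have h2 : u - v ∈ LinearMap.ker π := by
      rw [LinearMap.mem_ker, map_sub, huv, sub_self]
    have h3 := hker _ h2
    rw [map_sub] at h3
    exact sub_eq_zero.mp h3
  refine ⟨{ toFun := fun b => H (Finsupp.single b 1)
            map_add' := ?_
            map_smul' := ?_ }, ?_⟩
  · intro a b
    show H (Finsupp.single (a + b) 1) = H (Finsupp.single a 1) + H (Finsupp.single b 1)
    have h4 : π (Finsupp.single (a + b) 1)
        = π (Finsupp.single a 1 + Finsupp.single b 1) := by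
      rw [map_add, hπs, hπs, hπs]
    rw [hdiff _ _ h4, map_add]
  · intro r b
    show H (Finsupp.single (r • b) 1) = r • H (Finsupp.single b 1)
    have h4 : π (Finsupp.single (r • b) 1) = π (r • Finsupp.single b 1) := by
      rw [map_smul, hπs, hπs]
    rw [hdiff _ _ h4, map_smul]
  · intro x hx
    set b : ↥B := ⟨x, hAB hx⟩
    have hmem : Finsupp.single b 1 ∈ N' := by
      refine Submodule.mem_comap.mpr (Submodule.mem_comap.mpr ?_)
      show ((π (Finsupp.single b 1) : ↥B) : R) ∈ A
      rw [hπs]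
      exact hx
    show H (Finsupp.single b 1) = g ⟨x, hx⟩
    rw [hH _ hmem]
    show g (μ ⟨Finsupp.single b 1, hmem⟩) = g ⟨x, hx⟩
    congr 1
    refine Subtype.ext ?_
    show ((π (Finsupp.single b 1) : ↥B) : R) = x
    rw [hπs]

end Aux

open TensorProduct

/-- If `I` is a nilpotent ideal of a commutative ring `R` and `M` an `R`-module
such that `M/IM` is flat over `R/I` and `I ⊗[R] M → IM ⊆ M` is injective, then `M` is flat. -/
theorem stmt_0 {R : Type*} [CommRing R] {M : Type*} [AddCommGroup M] [Module R M]
    (I : Ideal R) (hnil : ∃ n : ℕ, I ^ n = ⊥)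
    (hflat : Module.Flat (R ⧸ I) (M ⧸ (I • (⊤ : Submodule R M))))
    (hinj : Function.Injective
      (TensorProduct.lift ((LinearMap.lsmul R M).comp I.subtype) :
        I ⊗[R] M →ₗ[R] M)) :
    Module.Flat R M := by
  obtain ⟨n, hn⟩ := hnil
  rw [Module.Flat.iff_characterModule_baer]
  intro J g
  have key : ∀ k : ℕ, k ≤ n → ∃ h : ↥(J ⊔ I ^ (n - k)) →ₗ[R] CharacterModule M,
      ∀ (x : R) (hx : x ∈ J), h ⟨x, Submodule.mem_sup_left hx⟩ = g ⟨x, hx⟩ := by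
    intro k
    induction k with
    | zero =>
      intro _
      have hle : J ⊔ I ^ (n - 0) ≤ J := by
        rw [Nat.sub_zero, hn]
        exact sup_le le_rfl bot_le
      exact ⟨g.comp (Submodule.inclusion hle), fun x hx => rfl⟩
    | succ k ih =>
      intro hk1
      obtain ⟨h, hh⟩ := ih (Nat.le_of_succ_le hk1)
      have hAB : J ⊔ I ^ (n - k) ≤ J ⊔ I ^ (n - (k + 1)) :=
        sup_le_sup_left (Ideal.pow_le_pow_right (by omega)) J
      have hIB : ∀ i ∈ I, ∀ b ∈ J ⊔ I ^ (n - (k + 1)), i * b ∈ J ⊔ I ^ (n - k) := by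
        intro i hi b hb
        obtain ⟨x, hx, y, hy, rfl⟩ := Submodule.mem_sup.mp hb
        rw [mul_add]
        refine Submodule.add_mem _ (Submodule.mem_sup_left (J.mul_mem_left i hx))
          (Submodule.mem_sup_right ?_)
        have he : n - k = (n - (k + 1)) + 1 := by omega
        rw [he, pow_succ, mul_comm i y]
        exact Ideal.mul_mem_mul hy hi
      obtain ⟨h', hh'⟩ := aux_step I hflat hinj _ _ hAB hIB h
      exact ⟨h', fun x hx => (hh' x (Submodule.mem_sup_left hx)).trans (hh x hx)⟩
  obtain ⟨h, hh⟩ := key n le_rfl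
  have htop : ∀ r : R, r ∈ J ⊔ I ^ (n - n) := by
    intro r
    have : J ⊔ I ^ (n - n) = ⊤ := by
      rw [Nat.sub_self, pow_zero, Ideal.one_eq_top, sup_top_eq]
    rw [this]
    exact Submodule.mem_top
  exact ⟨h.comp (LinearMap.codRestrict (J ⊔ I ^ (n - n)) LinearMap.id htop),
    fun x hx => hh x hx⟩
end

section
/- Let $f : R \to S$ be a faithfully flat homomorphism of commutative rings which is also an epimorphism in the category of commutative rings. Then $f$ is an isomorphism. -/
open TensorProduct

universe u

/-- A faithfully flat ring map which is an epimorphism of commutative rings is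
an isomorphism. -/
theorem stmt_5 {R S : Type u} [CommRing R] [CommRing S] [Algebra R S]
    [Module.Flat R S]
    (hfaith : ∀ (M : Type u) [AddCommGroup M] [Module R M],
        Nontrivial M → Nontrivial (S ⊗[R] M))
    (hepi : ∀ (T : Type u) [CommRing T] (g h : S →+* T),
        g.comp (algebraMap R S) = h.comp (algebraMap R S) → g = h) :
    Function.Bijective (algebraMap R S) := by
  -- Key consequence of epi: s ⊗ 1 = 1 ⊗ s in S ⊗[R] S.
  have key : ∀ s : S, (s ⊗ₜ[R] (1 : S) : S ⊗[R] S) = (1 : S) ⊗ₜ[R] s := by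
    have := hepi (S ⊗[R] S)
      (Algebra.TensorProduct.includeLeft (S := R)).toRingHom
      (Algebra.TensorProduct.includeRight).toRingHom (by
        ext r
        show (algebraMap R S r) ⊗ₜ[R] (1:S) = (1:S) ⊗ₜ[R] (algebraMap R S r)
        rw [Algebra.algebraMap_eq_smul_one, smul_tmul])
    intro s
    exact RingHom.congr_fun this s
  constructor
  · -- injectivity
    rw [injective_iff_map_eq_zero]
    intro r hr
    by_contra hne
    set K := RingHom.ker (algebraMap R S) with hK
    have hKnt : Nontrivial K :=
      ⟨⟨⟨r, hr⟩, 0, fun h => hne (congrArg Subtype.val h)⟩⟩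
    have := hfaith K hKnt
    -- the map S ⊗ K → S, s ⊗ k ↦ k • s is injective (flat) and zero
    let φ : S ⊗[R] K →ₗ[R] S :=
      (TensorProduct.rid R S).toLinearMap.comp
        (LinearMap.lTensor S (K : Submodule R R).subtype)
    have hφinj : Function.Injective φ := by
      apply Function.Injective.comp (TensorProduct.rid R S).injective
      exact Module.Flat.lTensor_preserves_injective_linearMap _ Subtype.val_injective
    have hφ0 : ∀ x : S ⊗[R] K, φ x = 0 := by
      intro x
      induction x using TensorProduct.induction_on with
      | zero => simp
      | tmul s k =>
        obtain ⟨k, hk⟩ := k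
        have : (algebraMap R S) k = 0 := hk
        simp [φ, TensorProduct.rid_tmul, Algebra.smul_def, this]
      | add x y hx hy => simp [hx, hy]
    rcases this with ⟨a, b, hab⟩
    exact hab (hφinj (by rw [hφ0 a, hφ0 b]))
  · -- surjectivity
    by_contra hsurj
    set N := LinearMap.range (Algebra.linearMap R S) with hN
    have hNne : N ≠ ⊤ := by
      intro h
      apply hsurj
      intro s
      have hs : s ∈ N := h ▸ Submodule.mem_top
      obtain ⟨y, hy⟩ := hs
      exact ⟨y, hy⟩
    have hMnt : Nontrivial (S ⧸ N) := Submodule.Quotient.nontrivial_iff.mpr hNne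
    have := hfaith (S ⧸ N) hMnt
    have hsub : ∀ x : S ⊗[R] (S ⧸ N), x = 0 := by
      intro x
      obtain ⟨y, rfl⟩ := LinearMap.lTensor_surjective S (N.mkQ_surjective) x
      induction y using TensorProduct.induction_on with
      | zero => simp
      | tmul s t =>
        have h1 : (s ⊗ₜ[R] t : S ⊗[R] S) = (s * t) ⊗ₜ[R] (1 : S) := by
          calc (s ⊗ₜ[R] t : S ⊗[R] S) = (s ⊗ₜ[R] (1:S)) * ((1:S) ⊗ₜ[R] t) := by
                rw [Algebra.TensorProduct.tmul_mul_tmul, mul_one, one_mul]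
            _ = (s ⊗ₜ[R] (1:S)) * (t ⊗ₜ[R] (1:S)) := by rw [key t]
            _ = (s * t) ⊗ₜ[R] (1:S) := by
                rw [Algebra.TensorProduct.tmul_mul_tmul, mul_one]
        rw [h1, LinearMap.lTensor_tmul]
        have : N.mkQ 1 = 0 := by
          simp only [Submodule.mkQ_apply, Submodule.Quotient.mk_eq_zero]
          exact ⟨1, map_one (algebraMap R S)⟩
        rw [this, tmul_zero]
      | add a b ha hb => rw [map_add, ha, hb, add_zero]
    rcases this with ⟨a, b, hab⟩
    exact hab ((hsub a).trans (hsub b).symm)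
end

section
/- Let $k$ be a field, $R$ a commutative $k$-algebra acted on by a group $G$ by $k$-algebra automorphisms, and suppose there is a power $q$ such that $a^q \in R^G$ for every $a \in R$ (where $R^G$ is the invariant subalgebra). Then the map $\mathrm{Spec}\, R \to \mathrm{Spec}\, R^G$ induced by the inclusion $R^G \subseteq R$ is surjective, and two $G$-stable radical ideals $I, J$ of $R$ satisfy $I \subseteq J$ if and only if $I \cap R^G \subseteq J \cap R^G$. -/
/-- The subalgebra of `G`-invariants of a `k`-algebra `R` with `G` acting by `k`-algebra
automorphisms. -/
def fixedSubalgebra (k : Type*) [CommSemiring k] (G : Type*) [Group G] (R : Type*)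
    [CommRing R] [Algebra k R] [MulSemiringAction G R] [SMulCommClass G k R] :
    Subalgebra k R where
  carrier := {a | ∀ g : G, g • a = a}
  mul_mem' := fun ha hb g => by rw [smul_mul', ha g, hb g]
  add_mem' := fun ha hb g => by rw [smul_add, ha g, hb g]
  algebraMap_mem' := fun c g => by
    rw [Algebra.algebraMap_eq_smul_one, smul_comm, smul_one]

/-- If a group `G` acts on a commutative `k`-algebra `R` by `k`-algebra
automorphisms and there is a power `q` with `a^q ∈ R^G` for every `a ∈ R`, then
`Spec R → Spec R^G` is surjective, and `G`-stable radical ideals `I, J` of `R` satisfy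
`I ⊆ J` iff `I ∩ R^G ⊆ J ∩ R^G`. -/
theorem stmt_11 {k : Type*} [Field k] {G : Type*} [Group G] {R : Type*}
    [CommRing R] [Algebra k R] [MulSemiringAction G R] [SMulCommClass G k R]
    (q : ℕ) (hq : 0 < q) (hpow : ∀ a : R, a ^ q ∈ fixedSubalgebra k G R) :
    Function.Surjective
        (PrimeSpectrum.comap ((fixedSubalgebra k G R).val.toRingHom)) ∧
      ∀ I J : Ideal R, I.IsRadical → J.IsRadical →
        (∀ (g : G), ∀ a ∈ I, g • a ∈ I) → (∀ (g : G), ∀ a ∈ J, g • a ∈ J) →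
        (I ≤ J ↔
          Ideal.comap ((fixedSubalgebra k G R).val.toRingHom) I ≤
            Ideal.comap ((fixedSubalgebra k G R).val.toRingHom) J) := by
  set A := fixedSubalgebra k G R
  have halg : (algebraMap A R) = A.val.toRingHom := rfl
  have hint : Algebra.IsIntegral A R := by
    refine ⟨fun a => ?_⟩
    refine ⟨Polynomial.X ^ q - Polynomial.C ⟨a ^ q, hpow a⟩, ?_, ?_⟩
    · exact Polynomial.monic_X_pow_sub_C _ hq.ne'
    · simp [Polynomial.eval₂_sub, Polynomial.eval₂_pow, halg]
  constructor
  · intro P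
    obtain ⟨Q, -, hQp, hQc⟩ := Ideal.exists_ideal_over_prime_of_isIntegral
      (R := A) (S := R) P.asIdeal ⊥ (by
        intro x hx
        have : A.val.toRingHom x = 0 := hx
        have : x = 0 := Subtype.ext (by simpa using this)
        simp [this])
    exact ⟨⟨Q, hQp⟩, PrimeSpectrum.ext (by simpa [halg] using hQc)⟩
  · intro I J _ hJ _ _
    constructor
    · intro h x hx
      exact h hx
    · intro h a ha
      have h1 : (⟨a ^ q, hpow a⟩ : A) ∈ Ideal.comap A.val.toRingHom I := by
        simpa [Ideal.mem_comap] using I.pow_mem_of_mem ha q hq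
      have h2 : a ^ q ∈ J := h h1
      exact hJ ⟨q, h2⟩
end

section
/- Let $k$ be a field of characteristic $p > 2$ and $L(p-1)$ the $p$-dimensional irreducible representation of $SL_2$ of highest weight $p-1$. Then the surjection $L(p-1) \otimes L(p-1) \to k$ (dual to the coevaluation, using self-duality of $L(p-1)$) has the property that its induced map $\mathrm{Sym}^p(L(p-1) \otimes L(p-1)) \to k$ admits an $SL_2$-equivariant splitting $k \to \mathrm{Sym}^p(L(p-1) \otimes L(p-1))$. -/
open MvPolynomial TensorProduct

noncomputable section

/-- The group `SL₂(k)`. -/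
abbrev SL2 (k : Type*) [CommRing k] := Matrix.SpecialLinearGroup (Fin 2) k

variable (k : Type*) [Field k]

variable {V : Type*} [AddCommGroup V] [Module k V]

/-- A representation of the abstract group `SL₂(k)` is rational (equivalently polynomial,
since `det = 1`) if its matrix coefficients in some basis are polynomial functions of the
matrix entries. -/
def IsRationalRep (ρ : Representation k (SL2 k) V) : Prop :=
  ∃ (n : ℕ) (b : Module.Basis (Fin n) k V) (P : Fin n → Fin n → MvPolynomial (Fin 2 × Fin 2) k),
    ∀ (g : SL2 k) (i j : Fin n),
      b.repr (ρ g (b j)) i =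
        eval (fun q : Fin 2 × Fin 2 => (g : Matrix (Fin 2) (Fin 2) k) q.1 q.2) (P i j)

/-- A submodule is a subrepresentation if it is stable under the group action. -/
def IsSubrep (ρ : Representation k (SL2 k) V) (q : Submodule k V) : Prop :=
  ∀ g : SL2 k, ∀ v ∈ q, ρ g v ∈ q

/-- Irreducibility of a representation. -/
def IsIrreducibleRep (ρ : Representation k (SL2 k) V) : Prop :=
  Nontrivial V ∧ ∀ q : Submodule k V, IsSubrep k ρ q → q = ⊥ ∨ q = ⊤

/-- The diagonal torus element `diag(t, t⁻¹)` of `SL₂(k)`. -/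
def diagT (t : kˣ) : SL2 k :=
  ⟨!![(t : k), 0; 0, ((t⁻¹ : kˣ) : k)], by
    simp [Matrix.det_fin_two_of, Units.mul_inv]⟩

/-- The weight space of weight `n ∈ ℤ` with respect to the diagonal torus. -/
def weightSpace (ρ : Representation k (SL2 k) V) (n : ℤ) : Submodule k V where
  carrier := {v | ∀ t : kˣ, ρ (diagT k t) v = ((t ^ n : kˣ) : k) • v}
  zero_mem' := by intro t; simp
  add_mem' := by intro a b ha hb t; rw [map_add, ha t, hb t, smul_add]
  smul_mem' := by intro c v hv t; rw [map_smul, hv t, smul_comm]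

/-- A representation has highest weight `a` if `a` is a weight and no larger integer is. -/
def HasHighestWeight (ρ : Representation k (SL2 k) V) (a : ℤ) : Prop :=
  weightSpace k ρ a ≠ ⊥ ∧ ∀ m : ℤ, a < m → weightSpace k ρ m = ⊥

variable {p : ℕ}

/-- The induced action of `g ∈ SL₂(k)` on the symmetric algebra
`Sym(V ⊗ V) = k[zᵢⱼ]`, where the variable `X (i,j)` corresponds to the basis vector
`b i ⊗ b j` of `V ⊗ V`. -/
def symAct (ρ : Representation k (SL2 k) V) (b : Module.Basis (Fin p) k V) (g : SL2 k) :
    MvPolynomial (Fin p × Fin p) k →ₐ[k] MvPolynomial (Fin p × Fin p) k :=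
  aeval (fun ij : Fin p × Fin p =>
    ∑ i' : Fin p, ∑ j' : Fin p,
      C (b.repr (ρ g (b ij.1)) i' * b.repr (ρ g (b ij.2)) j') * X (i', j'))

/-- The algebra map `Sym(V ⊗ V) → k` induced by a linear functional `φ : V ⊗ V → k`;
its restriction to the degree-`n` part is `Symⁿ φ`. -/
def symOfPairing (φ : V ⊗[k] V →ₗ[k] k) (b : Module.Basis (Fin p) k V) :
    MvPolynomial (Fin p × Fin p) k →ₐ[k] k :=
  aeval (fun ij : Fin p × Fin p => φ (b ij.1 ⊗ₜ[k] b ij.2))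

open Matrix

/-- Let `k` have characteristic `p > 2` and let `V = L(p-1)` be the
`p`-dimensional irreducible (rational) representation of `SL₂` of highest weight `p-1`
(the Steinberg module).  Let `φ : V ⊗ V → k` be the `SL₂`-equivariant surjection dual to the
coevaluation (an invariant pairing realizing the self-duality of `V`).  Then the induced map
`Sym^p(V ⊗ V) → k` admits an `SL₂`-equivariant splitting: there is an invariant element `w`
of degree `p` in `Sym(V ⊗ V)` with `(Sym^p φ) w = 1`. -/
theorem stmt_14 {k : Type*} [Field k] {p : ℕ} [Fact p.Prime] [CharP k p] (hp2 : 2 < p)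
    {V : Type*} [AddCommGroup V] [Module k V] [FiniteDimensional k V]
    (hdim : Module.finrank k V = p)
    (ρ : Representation k (SL2 k) V)
    (hrat : IsRationalRep k ρ)
    (hirr : IsIrreducibleRep k ρ)
    (hhw : HasHighestWeight k ρ ((p : ℤ) - 1))
    (φ : V ⊗[k] V →ₗ[k] k)
    (hsurj : Function.Surjective φ)
    (hequiv : ∀ g : SL2 k, φ ∘ₗ (TensorProduct.map (ρ g) (ρ g)) = φ)
    (b : Module.Basis (Fin p) k V) :
    ∃ w : MvPolynomial (Fin p × Fin p) k,
      w.IsHomogeneous p ∧ (∀ g : SL2 k, symAct k ρ b g w = w) ∧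
        symOfPairing k φ b w = 1 := by
  classical
  set M : Matrix (Fin p) (Fin p) k := Matrix.of fun i j => φ (b i ⊗ₜ[k] b j) with hM
  set Ag : SL2 k → Matrix (Fin p) (Fin p) k :=
    fun g => Matrix.of fun i' i => b.repr (ρ g (b i)) i' with hAg
  -- the right radical of φ
  let q : Submodule k V :=
    { carrier := {u | ∀ x : V, φ (x ⊗ₜ[k] u) = 0}
      zero_mem' := by intro x; simp
      add_mem' := by
        intro a b' ha hb x
        rw [Set.mem_setOf_eq] at ha hb
        rw [TensorProduct.tmul_add, _root_.map_add, ha x, hb x, add_zero]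
      smul_mem' := by
        intro c u hu x
        rw [Set.mem_setOf_eq] at hu
        rw [TensorProduct.tmul_smul, _root_.map_smul, hu x, smul_zero] }
  have hqsub : IsSubrep k ρ q := by
    intro g u hu x
    have h1 : ρ g (ρ g⁻¹ x) = x := by
      rw [← Module.End.mul_apply, ← _root_.map_mul, mul_inv_cancel, _root_.map_one, Module.End.one_apply]
    have h2 := LinearMap.congr_fun (hequiv g) ((ρ g⁻¹ x) ⊗ₜ[k] u)
    simp only [LinearMap.comp_apply, TensorProduct.map_tmul] at h2
    show φ (x ⊗ₜ[k] ρ g u) = 0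
    rw [← h1, h2]
    exact hu _
  have hqbot : q = ⊥ := by
    rcases hirr.2 q hqsub with h | h
    · exact h
    · exfalso
      obtain ⟨t, ht⟩ := hsurj 1
      have hz : ∀ z : V ⊗[k] V, φ z = 0 := by
        intro z
        induction z using TensorProduct.induction_on with
        | zero => simp
        | tmul x y =>
          have hy : y ∈ q := h ▸ Submodule.mem_top
          exact hy x
        | add a c ha hc => rw [_root_.map_add, ha, hc, add_zero]
      rw [hz t] at ht
      exact one_ne_zero ht.symm
  -- nondegeneracy of the Gram matrix
  have hdetM : M.det ≠ 0 := by
    intro h0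
    obtain ⟨v, hv, hMv⟩ := Matrix.exists_mulVec_eq_zero_iff.2 h0
    set u : V := ∑ j, v j • b j with hu
    have hui : ∀ i, φ (b i ⊗ₜ[k] u) = 0 := by
      intro i
      have h3 := congrFun hMv i
      simp only [Matrix.mulVec, dotProduct, hM, Matrix.of_apply, Pi.zero_apply] at h3
      calc φ (b i ⊗ₜ[k] u) = ∑ j, φ (b i ⊗ₜ[k] b j) * v j := by
            rw [hu, TensorProduct.tmul_sum]
            rw [_root_.map_sum]
            refine Finset.sum_congr rfl fun j _ => ?_
            rw [TensorProduct.tmul_smul, _root_.map_smul, smul_eq_mul, mul_comm]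
        _ = 0 := h3
    have humem : u ∈ q := by
      intro x
      have hx : x = ∑ i, b.repr x i • b i := (b.sum_repr x).symm
      rw [hx, TensorProduct.sum_tmul, _root_.map_sum]
      refine Finset.sum_eq_zero fun i _ => ?_
      rw [← TensorProduct.smul_tmul', _root_.map_smul, hui i, smul_zero]
    rw [hqbot, Submodule.mem_bot] at humem
    apply hv
    have : b.equivFun.symm v = 0 := by
      rw [Module.Basis.equivFun_symm_apply]; exact humem
    simpa using b.equivFun.symm.injective (by simpa using this)
  -- the Gram matrix is invariant: Agᵀ * M * Ag = M
  have hgram : ∀ g : SL2 k, (Ag g)ᵀ * M * Ag g = M := by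
    intro g
    ext i j
    have h2 := LinearMap.congr_fun (hequiv g) (b i ⊗ₜ[k] b j)
    simp only [LinearMap.comp_apply, TensorProduct.map_tmul] at h2
    have e1 : (ρ g) (b i) = ∑ x, Ag g x i • b x := (b.sum_repr _).symm
    have e2 : (ρ g) (b j) = ∑ y, Ag g y j • b y := (b.sum_repr _).symm
    rw [e1, e2, TensorProduct.sum_tmul, _root_.map_sum] at h2
    simp only [TensorProduct.tmul_sum, _root_.map_sum, TensorProduct.smul_tmul',
      TensorProduct.tmul_smul, _root_.map_smul, smul_eq_mul] at h2
    show ((Ag g)ᵀ * M * Ag g) i j = φ (b i ⊗ₜ[k] b j)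
    rw [← h2]
    simp only [Matrix.mul_apply, Matrix.transpose_apply, Finset.sum_mul, Finset.mul_sum]
    rw [Finset.sum_comm]
    refine Finset.sum_congr rfl fun x _ => Finset.sum_congr rfl fun y _ => ?_
    rw [smul_smul, ← TensorProduct.smul_tmul', _root_.map_smul, smul_eq_mul]
    simp only [hM, Matrix.of_apply]
    ring
  have hdet1 : ∀ g : SL2 k, (Ag g).det ^ 2 = 1 := by
    intro g
    have h4 := congrArg Matrix.det (hgram g)
    rw [Matrix.det_mul, Matrix.det_mul, Matrix.det_transpose] at h4
    have h5 : (Ag g).det ^ 2 * M.det = 1 * M.det := by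
      rw [one_mul]
      calc (Ag g).det ^ 2 * M.det = (Ag g).det * M.det * (Ag g).det := by ring
        _ = M.det := h4
    exact mul_right_cancel₀ hdetM h5
  set Z : Matrix (Fin p) (Fin p) (MvPolynomial (Fin p × Fin p) k) :=
    Matrix.of fun i j => X (i, j) with hZ
  refine ⟨C M.det⁻¹ * Z.det, ?_, ?_, ?_⟩
  · -- homogeneity
    apply MvPolynomial.IsHomogeneous.C_mul
    rw [Matrix.det_apply]
    refine MvPolynomial.IsHomogeneous.sum _ _ _ fun σ _ => ?_
    have hprod : (∏ i, Z (σ i) i).IsHomogeneous p := by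
      have := MvPolynomial.IsHomogeneous.prod Finset.univ (fun i => Z (σ i) i) (fun _ => 1)
        (fun i _ => by simpa [hZ] using isHomogeneous_X k (σ i, i))
      simpa using this
    rcases Int.units_eq_one_or (Equiv.Perm.sign σ) with h | h
    · rw [h, one_smul]; exact hprod
    · rw [h]
      have : (-1 : ℤˣ) • (∏ i, Z (σ i) i) = -(∏ i, Z (σ i) i) := by
        rw [Units.smul_def]; simp
      rw [this]
      exact hprod.neg
  · -- invariance
    intro g
    have hmapdet : symAct k ρ b g Z.det = (Z.map (symAct k ρ b g)).det := by
      rw [AlgHom.map_det]; rfl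
    have hZmap : Z.map (symAct k ρ b g) = ((Ag g).map C)ᵀ * Z * ((Ag g).map C) := by
      refine Matrix.ext fun i j => ?_
      simp only [Matrix.map_apply, hZ, Matrix.of_apply, symAct, aeval_X]
      simp only [Matrix.mul_apply, Matrix.transpose_apply, Matrix.map_apply,
        Finset.sum_mul, Finset.mul_sum]
      rw [Finset.sum_comm]
      refine Finset.sum_congr rfl fun x _ => Finset.sum_congr rfl fun y _ => ?_
      simp only [hAg, Matrix.of_apply, _root_.map_mul]
      ring
    have hdetC : ((Ag g).map ⇑(C : k →+* MvPolynomial (Fin p × Fin p) k)).det = C (Ag g).det :=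
      ((C : k →+* MvPolynomial (Fin p × Fin p) k).map_det (Ag g)).symm
    have hsZ : symAct k ρ b g Z.det = Z.det := by
      rw [hmapdet, hZmap, Matrix.det_mul, Matrix.det_mul, Matrix.det_transpose, hdetC]
      calc C (Ag g).det * Z.det * C (Ag g).det
          = C ((Ag g).det ^ 2) * Z.det := by rw [map_pow]; ring
        _ = Z.det := by rw [hdet1 g, _root_.map_one, one_mul]
    rw [_root_.map_mul, hsZ]
    congr 1
    have : (C M.det⁻¹ : MvPolynomial (Fin p × Fin p) k) = algebraMap k _ M.det⁻¹ := rfl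
    rw [this, AlgHom.commutes]
  · -- pairing with φ gives 1
    have hmapdet : symOfPairing k φ b Z.det = (Z.map (symOfPairing k φ b)).det := by
      rw [AlgHom.map_det]; rfl
    have hZmap : Z.map (symOfPairing k φ b) = M := by
      refine Matrix.ext fun i j => ?_
      simp only [Matrix.map_apply, hZ, Matrix.of_apply, symOfPairing, aeval_X, hM]
    rw [_root_.map_mul, hmapdet, hZmap]
    have hC : symOfPairing k φ b (C M.det⁻¹) = M.det⁻¹ := by
      have : (C M.det⁻¹ : MvPolynomial (Fin p × Fin p) k) = algebraMap k _ M.det⁻¹ := rfl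
      rw [this, AlgHom.commutes]; rfl
    rw [hC, inv_mul_cancel₀ hdetM]


end
end

section
/- Let $k$ be a field and $H \leq G$ affine group schemes over $k$. If every finite-dimensional representation of $H$ embeds into the restriction to $H$ of a finite-dimensional representation of $G$, then $H$ is an intersection of stabilizer subgroups $G_v$ of vectors $v$ in finite-dimensional $G$-representations. -/
open TensorProduct

universe u

/-- A finite-dimensional right comodule over a Hopf algebra `A` over a field `k`,
i.e. a finite-dimensional representation of the affine group scheme `Spec A`. -/
structure FdComod (k A : Type u) [Field k] [CommRing A] [HopfAlgebra k A] where
  V : Type u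
  [isAddCommGroup : AddCommGroup V]
  [isModule : Module k V]
  [isFinite : FiniteDimensional k V]
  coaction : V →ₗ[k] V ⊗[k] A
  counit_coaction : ∀ v : V,
    (LinearMap.lTensor V (Coalgebra.counit (R := k))) (coaction v) = v ⊗ₜ[k] (1 : k)
  coassoc : (TensorProduct.assoc k V A A).toLinearMap ∘ₗ
      (LinearMap.rTensor A coaction) ∘ₗ coaction =
    (LinearMap.lTensor V (Coalgebra.comul (R := k))) ∘ₗ coaction

attribute [instance] FdComod.isAddCommGroup FdComod.isModule FdComod.isFinite






section Plumbing

variable {k : Type u} [Field k]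

/-- pointwise commutation of rTensor and lTensor -/
theorem comm_rl {M N P Q : Type*} [AddCommGroup M] [AddCommGroup N] [AddCommGroup P]
    [AddCommGroup Q] [Module k M] [Module k N] [Module k P] [Module k Q]
    (f : M →ₗ[k] P) (g : N →ₗ[k] Q) (t : M ⊗[k] N) :
    LinearMap.rTensor Q f (LinearMap.lTensor M g t) =
      LinearMap.lTensor P g (LinearMap.rTensor N f t) := by
  rw [← LinearMap.comp_apply, ← LinearMap.comp_apply,
    LinearMap.rTensor_comp_lTensor, LinearMap.lTensor_comp_rTensor]

theorem rTensor_inj {M P X : Type*} [AddCommGroup M] [AddCommGroup P] [AddCommGroup X]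
    [Module k M] [Module k P] [Module k X]
    {f : M →ₗ[k] P} {q : P →ₗ[k] M} (hq : q ∘ₗ f = LinearMap.id) :
    Function.Injective (LinearMap.rTensor X f) := by
  intro t t' h
  have := congrArg (LinearMap.rTensor X q) h
  rwa [← LinearMap.comp_apply, ← LinearMap.comp_apply, ← LinearMap.rTensor_comp, hq,
    LinearMap.rTensor_id, LinearMap.id_apply, LinearMap.id_apply] at this

end Plumbing

section Coef

variable {k : Type u} [Field k] {W : Type*} [AddCommGroup W] [Module k W]
variable {n : ℕ} (bas : Module.Basis (Fin n) k W)

/-- extraction of the `l`-th coefficient of a tensor `t : W ⊗ X` w.r.t. a basis of `W`. -/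
noncomputable def coef (X : Type*) [AddCommGroup X] [Module k X] (l : Fin n) :
    W ⊗[k] X →ₗ[k] X :=
  (TensorProduct.lid k X).toLinearMap ∘ₗ LinearMap.rTensor X (bas.coord l)

@[simp] theorem coef_tmul (X : Type*) [AddCommGroup X] [Module k X] (l : Fin n)
    (w : W) (x : X) : coef bas X l (w ⊗ₜ[k] x) = bas.coord l w • x := by
  simp [coef]

theorem coef_sum_basis (X : Type*) [AddCommGroup X] [Module k X] (l : Fin n)
    (x : Fin n → X) : coef bas X l (∑ j, bas j ⊗ₜ[k] x j) = x l := by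
  rw [map_sum]
  simp only [coef_tmul, Module.Basis.coord_apply, Module.Basis.repr_self, Finsupp.single_apply, ite_smul,
    one_smul, zero_smul]
  simp

theorem coef_recon (X : Type*) [AddCommGroup X] [Module k X] (t : W ⊗[k] X) :
    ∑ l, bas l ⊗ₜ[k] coef bas X l t = t := by
  induction t with
  | zero => simp
  | add a b ha hb => simp only [map_add, tmul_add, Finset.sum_add_distrib, ha, hb]
  | tmul w x =>
    calc ∑ l, bas l ⊗ₜ[k] (bas.coord l (w) • x)
        = ∑ l, (bas.repr w l • bas l) ⊗ₜ[k] x := by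
          simp only [coef_tmul, tmul_smul, smul_tmul', Module.Basis.coord_apply]
      _ = w ⊗ₜ[k] x := by rw [← sum_tmul, Module.Basis.sum_repr]
    

end Coef
set_option maxHeartbeats 1000000
set_option synthInstance.maxHeartbeats 200000

section LocalFiniteness

variable {k : Type u} [Field k] {B : Type u} [CommRing B] [HopfAlgebra k B]

open Coalgebra LinearMap

variable (k B) in
/-- decomposition of `X ⊗ B` along a fixed basis of `B` -/
noncomputable def psi (X : Type u) [AddCommGroup X] [Module k X] :
    X ⊗[k] B ≃ₗ[k] (Module.Basis.ofVectorSpaceIndex k B →₀ X) :=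
  letI := Classical.decEq (Module.Basis.ofVectorSpaceIndex k B)
  (TensorProduct.congr (LinearEquiv.refl k X) (Module.Basis.ofVectorSpace k B).repr).trans
    (TensorProduct.finsuppScalarRight k k X (Module.Basis.ofVectorSpaceIndex k B))

theorem psi_tmul (X : Type u) [AddCommGroup X] [Module k X] (x : X) (b : B) (i) :
    psi k B X (x ⊗ₜ[k] b) i = (Module.Basis.ofVectorSpace k B).repr b i • x := by
  letI := Classical.decEq (Module.Basis.ofVectorSpaceIndex k B)
  simp [psi, TensorProduct.finsuppScalarRight_apply_tmul_apply]

theorem psi_tmul_basis (X : Type u) [AddCommGroup X] [Module k X] (x : X) (i) :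
    psi k B X (x ⊗ₜ[k] (Module.Basis.ofVectorSpace k B i : B)) = Finsupp.single i x := by
  classical
  ext j
  rw [psi_tmul, Module.Basis.repr_self]
  simp [Finsupp.single_apply, ite_smul]

theorem psi_recon (X : Type u) [AddCommGroup X] [Module k X] (t : X ⊗[k] B) :
    ∑ i ∈ (psi k B X t).support, (psi k B X t i) ⊗ₜ[k] (Module.Basis.ofVectorSpace k B i : B) = t := by
  apply (psi k B X).injective
  rw [map_sum]
  simp only [psi_tmul_basis]
  conv_rhs => rw [← Finsupp.sum_single (psi k B X t)]
  rfl

theorem psi_natural {X Y : Type u} [AddCommGroup X] [Module k X] [AddCommGroup Y] [Module k Y]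
    (f : X →ₗ[k] Y) (t : X ⊗[k] B) (i) :
    psi k B Y (rTensor B f t) i = f (psi k B X t i) := by
  induction t with
  | zero => simp
  | add a b ha hb => simp [ha, hb]
  | tmul x b => simp [psi_tmul]

theorem psi_assoc_symm (X : Type u) [AddCommGroup X] [Module k X] (x : X) (u : B ⊗[k] B) (i) :
    psi k B (X ⊗[k] B) ((TensorProduct.assoc k X B B).symm (x ⊗ₜ[k] u)) i
      = x ⊗ₜ[k] (psi k B B u i) := by
  induction u with
  | zero => simp
  | add a b ha hb => simp [tmul_add, ha, hb, TensorProduct.tmul_add]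
  | tmul c d => simp [psi_tmul, TensorProduct.tmul_smul]

/-- every element of `B` lies in a finite-dimensional subcomodule of `B` -/
theorem exists_subcomodule (b : B) :
    ∃ W : Submodule k B, b ∈ W ∧ FiniteDimensional k ↥W ∧
      ∀ w ∈ W, comul (R := k) w ∈ LinearMap.range (rTensor B W.subtype) := by
  classical
  set e := Module.Basis.ofVectorSpace k B with he
  set l := psi k B B (comul (R := k) b) with hl
  set W : Submodule k B := Submodule.span k ((fun i => l i) '' ↑l.support) with hW
  have hmem : ∀ i ∈ l.support, l i ∈ W := fun i hi =>
    Submodule.subset_span ⟨i, hi, rfl⟩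
  have hrecon : ∑ i ∈ l.support, (l i) ⊗ₜ[k] (e i : B) = comul (R := k) b := psi_recon B _
  refine ⟨W, ?_, FiniteDimensional.span_of_finite k (Set.Finite.image _ l.support.finite_toSet), ?_⟩
  · -- b ∈ W via counit
    have h1 := congrArg (lTensor B (counit (R := k))) hrecon
    rw [lTensor_counit_comul] at h1
    have h2 := congrArg (TensorProduct.rid k B) h1
    simp only [map_sum, lTensor_tmul, TensorProduct.rid_tmul] at h2
    rw [one_smul] at h2
    rw [← h2]
    exact Submodule.sum_mem _ fun i hi => Submodule.smul_mem _ _ (hmem i hi)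
  · -- comodule stability
    intro w hw
    refine Submodule.span_induction ?_ ?_ ?_ ?_ hw
    · rintro x ⟨i, hi, rfl⟩
      have hsum : rTensor B (comul (R := k)) (comul (R := k) b)
          = ∑ j ∈ l.support, (TensorProduct.assoc k B B B).symm ((l j) ⊗ₜ[k]
              (comul (R := k) (e j : B))) := by
        rw [← Coalgebra.coassoc_symm_apply b, ← hrecon, map_sum]
        rw [map_sum ((TensorProduct.assoc k B B B).symm : B ⊗[k] (B ⊗[k] B) ≃ₗ[k] _) _ _]
        simp only [lTensor_tmul]
      have key : comul (R := k) (l i)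
          = ∑ j ∈ l.support, (l j) ⊗ₜ[k] (psi k B B (comul (R := k) (e j : B)) i) := by
        have h0 : comul (R := k) (l i) = psi k B (B ⊗[k] B) (rTensor B (comul (R := k))
            (comul (R := k) b)) i := (psi_natural _ _ _).symm
        rw [h0, hsum, map_sum, Finsupp.finset_sum_apply]
        exact Finset.sum_congr rfl fun j _ => psi_assoc_symm B _ _ _
      rw [key]
      refine Submodule.sum_mem _ fun j hj => ?_
      exact ⟨(⟨l j, hmem j hj⟩ : ↥W) ⊗ₜ[k] _, rfl⟩
    · simp
    · intro x y _ _ hx hy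
      rw [map_add]; exact Submodule.add_mem _ hx hy
    · intro c x _ hx
      rw [map_smul]; exact Submodule.smul_mem _ c hx

end LocalFiniteness
section SubComod

open Coalgebra LinearMap

variable {k : Type u} [Field k] {A : Type u} [CommRing A] [HopfAlgebra k A]
variable (W : Submodule k A) [FiniteDimensional k ↥W]
variable (hW : ∀ w ∈ W, comul (R := k) w ∈ LinearMap.range (rTensor A W.subtype))

/-- a linear retraction of the inclusion of a subspace -/
noncomputable def retr : A →ₗ[k] ↥W :=
  (W.subtype.exists_leftInverse_of_injective W.ker_subtype).choose

omit [FiniteDimensional k ↥W] in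
theorem retr_subtype : (retr W) ∘ₗ W.subtype = LinearMap.id :=
  (W.subtype.exists_leftInverse_of_injective W.ker_subtype).choose_spec

/-- the coaction of a subcomodule -/
noncomputable def subCoaction : ↥W →ₗ[k] ↥W ⊗[k] A :=
  (rTensor A (retr W)) ∘ₗ (comul (R := k)) ∘ₗ W.subtype

include hW in
theorem subCoaction_key :
    (rTensor A W.subtype) ∘ₗ subCoaction W = (comul (R := k)) ∘ₗ W.subtype := by
  ext w
  obtain ⟨t, ht⟩ := hW ↑w w.2
  simp only [LinearMap.comp_apply, subCoaction, Submodule.coe_subtype]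
  rw [← ht, ← LinearMap.comp_apply (rTensor A (retr W)), ← LinearMap.rTensor_comp,
    ← LinearMap.comp_apply (rTensor A _), ← LinearMap.rTensor_comp,
    retr_subtype, LinearMap.comp_id, ht]

include hW in
theorem subCoaction_key_apply (w : ↥W) :
    (rTensor A W.subtype) (subCoaction W w) = comul (R := k) (w : A) :=
  by simpa using LinearMap.congr_fun (subCoaction_key W hW) w

include hW in
theorem subCoaction_counit (w : ↥W) :
    (lTensor ↥W (counit (R := k))) (subCoaction W w) = w ⊗ₜ[k] (1 : k) := by
  apply rTensor_inj (retr_subtype W) (X := k)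
  rw [comm_rl, subCoaction_key_apply W hW w, lTensor_counit_comul]
  simp

include hW in
theorem subCoaction_coassoc :
    (TensorProduct.assoc k ↥W A A).toLinearMap ∘ₗ
      (LinearMap.rTensor A (subCoaction W)) ∘ₗ (subCoaction W) =
    (LinearMap.lTensor ↥W (comul (R := k))) ∘ₗ (subCoaction W) := by
  ext w
  apply rTensor_inj (retr_subtype W) (X := A ⊗[k] A)
  have assoc_nat : ∀ t : (↥W ⊗[k] A) ⊗[k] A,
      rTensor (A ⊗[k] A) W.subtype ((TensorProduct.assoc k ↥W A A) t)
        = (TensorProduct.assoc k A A A) (rTensor A (rTensor A W.subtype) t) := by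
    intro t
    induction t with
    | zero => simp
    | add a b ha hb => simp [ha, hb]
    | tmul x c =>
      induction x with
      | zero => simp
      | add a b ha hb => simp [add_tmul, ha, hb]
      | tmul w d => simp
  simp only [LinearMap.comp_apply, LinearEquiv.coe_coe]
  rw [assoc_nat, ← LinearMap.comp_apply (rTensor A (rTensor A W.subtype)),
    ← LinearMap.rTensor_comp, subCoaction_key W hW, LinearMap.rTensor_comp,
    LinearMap.comp_apply, subCoaction_key_apply W hW, Coalgebra.coassoc_apply,
    comm_rl, subCoaction_key_apply W hW]

/-- the `FdComod` structure on a finite-dimensional subcomodule of `A` -/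
noncomputable def subComod : FdComod k A where
  V := ↥W
  coaction := subCoaction W
  counit_coaction := subCoaction_counit W hW
  coassoc := subCoaction_coassoc W hW

theorem subComod_key_apply (w : ↥W) :
    (rTensor A W.subtype) ((subComod W hW).coaction w) = comul (R := k) (w : A) :=
  subCoaction_key_apply W hW w

end SubComod
set_option linter.unusedSectionVars false

section MatrixCoef

open Coalgebra LinearMap HopfAlgebra

variable {k : Type u} [Field k] {A : Type u} [CommRing A] [HopfAlgebra k A]
variable (Wc : FdComod k A) {n : ℕ} (bas : Module.Basis (Fin n) k Wc.V)

/-- the matrix coefficients of a finite-dimensional comodule -/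
noncomputable def mat (l j : Fin n) : A := coef bas A l (Wc.coaction (bas j))

theorem coaction_basis (j : Fin n) :
    Wc.coaction (bas j) = ∑ l, bas l ⊗ₜ[k] mat Wc bas l j :=
  (coef_recon bas A _).symm

theorem mat_comul (m j : Fin n) :
    comul (R := k) (mat Wc bas m j) = ∑ l, mat Wc bas m l ⊗ₜ[k] mat Wc bas l j := by
  have h := LinearMap.congr_fun Wc.coassoc (bas j)
  simp only [LinearMap.comp_apply, LinearEquiv.coe_coe] at h
  rw [coaction_basis Wc bas j, map_sum, map_sum] at h
  simp only [rTensor_tmul, lTensor_tmul, coaction_basis Wc bas] at h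
  have h2 : ∀ l : Fin n, (TensorProduct.assoc k Wc.V A A)
      ((∑ m, bas m ⊗ₜ[k] mat Wc bas m l) ⊗ₜ[k] mat Wc bas l j)
      = ∑ m, bas m ⊗ₜ[k] (mat Wc bas m l ⊗ₜ[k] mat Wc bas l j) := by
    intro l
    rw [sum_tmul, map_sum]
    simp [TensorProduct.assoc_tmul]
  rw [Finset.sum_congr rfl fun l _ => h2 l, Finset.sum_comm] at h
  have h3 := congrArg (coef bas (A ⊗[k] A) m) h
  have hL : ∑ y : Fin n, ∑ x : Fin n, bas y ⊗ₜ[k] (mat Wc bas y x ⊗ₜ[k] mat Wc bas x j)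
      = ∑ y : Fin n, bas y ⊗ₜ[k] (∑ x, mat Wc bas y x ⊗ₜ[k] mat Wc bas x j) :=
    Finset.sum_congr rfl fun y _ => (TensorProduct.tmul_sum _ _ _).symm
  have hR : lTensor Wc.V (comul (R := k)) (∑ l, bas l ⊗ₜ[k] mat Wc bas l j)
      = ∑ l, bas l ⊗ₜ[k] comul (R := k) (mat Wc bas l j) := by
    rw [map_sum]; simp
  rw [hL, hR, coef_sum_basis, coef_sum_basis] at h3
  exact h3.symm

theorem mat_counit (l j : Fin n) :
    counit (R := k) (mat Wc bas l j) = if l = j then 1 else 0 := by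
  have h := Wc.counit_coaction (bas j)
  rw [coaction_basis Wc bas j, map_sum] at h
  simp only [lTensor_tmul] at h
  -- transfer along W ⊗ k: apply coef bas k l
  have h2 := congrArg (coef bas k l) h
  rw [coef_sum_basis] at h2
  simp only [coef_tmul, Module.Basis.coord_apply, Module.Basis.repr_self, Finsupp.single_apply, smul_eq_mul,
    mul_one] at h2
  rw [h2]
  simp [eq_comm]

end MatrixCoef
section AntipodeMat

open Coalgebra LinearMap HopfAlgebra

variable {k : Type u} [Field k] {A : Type u} [CommRing A] [HopfAlgebra k A]
variable (Wc : FdComod k A) {n : ℕ} (bas : Module.Basis (Fin n) k Wc.V)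

theorem mat_antipode_mul (l j : Fin n) :
    ∑ m, antipode (R := k) (mat Wc bas l m) * mat Wc bas m j
      = if l = j then 1 else 0 := by
  have h := mul_antipode_rTensor_comul_apply (R := k) (mat Wc bas l j)
  rw [mat_comul Wc bas, map_sum, map_sum] at h
  simp only [rTensor_tmul, LinearMap.mul'_apply] at h
  rw [h, mat_counit Wc bas]
  split <;> simp

theorem mat_mul_antipode (l j : Fin n) :
    ∑ m, mat Wc bas l m * antipode (R := k) (mat Wc bas m j)
      = if l = j then 1 else 0 := by
  have h := mul_antipode_lTensor_comul_apply (R := k) (mat Wc bas l j)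
  rw [mat_comul Wc bas, map_sum, map_sum] at h
  simp only [lTensor_tmul, LinearMap.mul'_apply] at h
  rw [h, mat_counit Wc bas]
  split <;> simp

theorem mat_antipode_counit (l j : Fin n) :
    counit (R := k) (antipode (R := k) (mat Wc bas l j)) = if l = j then 1 else 0 := by
  have h := congrArg (counit (R := k)) (mat_antipode_mul Wc bas l j)
  rw [map_sum] at h
  simp only [Bialgebra.counit_mul, mat_counit Wc bas] at h
  rw [Finset.sum_congr rfl (fun m _ => by
    rw [show counit (R := k) (antipode (R := k) (mat Wc bas l m)) *
        (if m = j then (1:k) else 0) = if m = j then counit (R := k)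
          (antipode (R := k) (mat Wc bas l m)) else 0 by split <;> simp]),
    Finset.sum_ite_eq'] at h
  simp only [Finset.mem_univ, if_true] at h
  rw [h]
  split <;> simp [Bialgebra.counit_one]

/-- the antipode is compatible with comultiplication on matrix coefficients -/
theorem mat_antipode_comul (l j : Fin n) :
    comul (R := k) (antipode (R := k) (mat Wc bas l j))
      = ∑ m, antipode (R := k) (mat Wc bas m j) ⊗ₜ[k] antipode (R := k) (mat Wc bas l m) := by
  classical
  have hYD : ∀ l j : Fin n, ∑ m, comul (R := k) (antipode (R := k) (mat Wc bas l m)) *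
      comul (R := k) (mat Wc bas m j) = if l = j then 1 else 0 := by
    intro l j
    rw [Finset.sum_congr rfl fun m _ => (Bialgebra.comul_mul _ _).symm, ← map_sum,
      mat_antipode_mul Wc bas l j]
    split <;> simp [Bialgebra.comul_one]
  have hDZ : ∀ l j : Fin n, ∑ m, comul (R := k) (mat Wc bas l m) *
      (∑ p, antipode (R := k) (mat Wc bas p j) ⊗ₜ[k] antipode (R := k) (mat Wc bas m p))
      = if l = j then 1 else 0 := by
    intro l j
    have h1 : ∀ m : Fin n, comul (R := k) (mat Wc bas l m) *
        (∑ p, antipode (R := k) (mat Wc bas p j) ⊗ₜ[k] antipode (R := k) (mat Wc bas m p))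
        = ∑ p, ∑ q, (mat Wc bas l p * antipode (R := k) (mat Wc bas q j)) ⊗ₜ[k]
            (mat Wc bas p m * antipode (R := k) (mat Wc bas m q)) := by
      intro m
      rw [mat_comul Wc bas, Finset.sum_mul]
      refine Finset.sum_congr rfl fun p _ => ?_
      rw [Finset.mul_sum]
      exact Finset.sum_congr rfl fun q _ => Algebra.TensorProduct.tmul_mul_tmul _ _ _ _
    calc ∑ m, comul (R := k) (mat Wc bas l m) *
          (∑ p, antipode (R := k) (mat Wc bas p j) ⊗ₜ[k] antipode (R := k) (mat Wc bas m p))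
        = ∑ m, ∑ p, ∑ q, (mat Wc bas l p * antipode (R := k) (mat Wc bas q j)) ⊗ₜ[k]
            (mat Wc bas p m * antipode (R := k) (mat Wc bas m q)) :=
          Finset.sum_congr rfl fun m _ => h1 m
      _ = ∑ p, ∑ q, (mat Wc bas l p * antipode (R := k) (mat Wc bas q j)) ⊗ₜ[k]
            (∑ m, mat Wc bas p m * antipode (R := k) (mat Wc bas m q)) := by
          rw [Finset.sum_comm]
          refine Finset.sum_congr rfl fun p _ => ?_
          rw [Finset.sum_comm]
          exact Finset.sum_congr rfl fun q _ => (TensorProduct.tmul_sum _ _ _).symm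
      _ = ∑ p, (mat Wc bas l p * antipode (R := k) (mat Wc bas p j)) ⊗ₜ[k] (1 : A) := by
          refine Finset.sum_congr rfl fun p _ => ?_
          rw [Finset.sum_congr rfl fun q _ => by rw [mat_mul_antipode Wc bas p q]]
          rw [Finset.sum_congr rfl (fun q _ => by
            rw [show (mat Wc bas l p * antipode (R := k) (mat Wc bas q j)) ⊗ₜ[k]
                (if p = q then (1:A) else 0)
              = if p = q then (mat Wc bas l p * antipode (R := k) (mat Wc bas q j)) ⊗ₜ[k] (1:A)
                else 0 by split <;> simp [TensorProduct.tmul_zero]]), Finset.sum_ite_eq]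
          simp
      _ = (∑ p, mat Wc bas l p * antipode (R := k) (mat Wc bas p j)) ⊗ₜ[k] (1 : A) := by
          rw [TensorProduct.sum_tmul]
      _ = if l = j then 1 else 0 := by
          rw [mat_mul_antipode Wc bas l j]
          split <;> simp [Algebra.TensorProduct.one_def]
  -- matrix inverse uniqueness
  calc comul (R := k) (antipode (R := k) (mat Wc bas l j))
      = ∑ q, comul (R := k) (antipode (R := k) (mat Wc bas l q)) *
          (if q = j then 1 else 0) := by
        rw [Finset.sum_congr rfl (fun q _ => by
          rw [show comul (R := k) (antipode (R := k) (mat Wc bas l q)) *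
              (if q = j then (1 : A ⊗[k] A) else 0)
            = if q = j then comul (R := k) (antipode (R := k) (mat Wc bas l q)) else 0 by
              split <;> simp]), Finset.sum_ite_eq']
        simp
    _ = ∑ q, comul (R := k) (antipode (R := k) (mat Wc bas l q)) *
          (∑ m, comul (R := k) (mat Wc bas q m) *
            (∑ p, antipode (R := k) (mat Wc bas p j) ⊗ₜ[k] antipode (R := k) (mat Wc bas m p)))
          := Finset.sum_congr rfl fun q _ => by rw [hDZ q j]
    _ = ∑ m, (∑ q, comul (R := k) (antipode (R := k) (mat Wc bas l q)) *
          comul (R := k) (mat Wc bas q m)) *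
          (∑ p, antipode (R := k) (mat Wc bas p j) ⊗ₜ[k] antipode (R := k) (mat Wc bas m p))
          := by
        rw [Finset.sum_congr rfl fun q (_ : q ∈ Finset.univ) => Finset.mul_sum _ _ _,
          Finset.sum_comm]
        refine Finset.sum_congr rfl fun m _ => ?_
        rw [Finset.sum_mul]
        exact Finset.sum_congr rfl fun q _ => (mul_assoc _ _ _).symm
    _ = ∑ m, (if l = m then (1 : A ⊗[k] A) else 0) *
          (∑ p, antipode (R := k) (mat Wc bas p j) ⊗ₜ[k] antipode (R := k) (mat Wc bas m p))
          := Finset.sum_congr rfl fun m _ => by rw [hYD l m]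
    _ = ∑ m, antipode (R := k) (mat Wc bas m j) ⊗ₜ[k] antipode (R := k) (mat Wc bas l m) := by
        rw [Finset.sum_congr rfl (fun m _ => by rw [ite_mul, one_mul, zero_mul]),
          Finset.sum_ite_eq]
        simp

end AntipodeMat
section HomComod

open Coalgebra LinearMap HopfAlgebra

variable {k : Type u} [Field k] {B : Type u} [CommRing B] [HopfAlgebra k B]
variable (Wc V : FdComod k B) {n : ℕ} (bas : Module.Basis (Fin n) k Wc.V)

/-- rank one operator -/
noncomputable def rk (p : Fin n) : V.V →ₗ[k] (Wc.V →ₗ[k] V.V) :=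
  LinearMap.smulRightₗ (bas.coord p)

@[simp] theorem rk_apply (p : Fin n) (a : V.V) (w : Wc.V) :
    rk Wc V bas p a w = bas.coord p w • a := rfl

theorem rk_basis (p : Fin n) (a : V.V) (j : Fin n) :
    rk Wc V bas p a (bas j) = if j = p then a else 0 := by
  rw [rk_apply, Module.Basis.coord_apply, Module.Basis.repr_self, Finsupp.single_apply]
  split <;> simp

theorem sum_rk (φ : Wc.V →ₗ[k] V.V) : ∑ p, rk Wc V bas p (φ (bas p)) = φ := by
  ext w
  rw [LinearMap.sum_apply]
  simp only [rk_apply, Module.Basis.coord_apply]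
  conv_rhs => rw [← Module.Basis.sum_repr bas w]
  rw [map_sum]
  simp only [map_smul]

/-- building block of the coaction on an internal hom -/
noncomputable def Phi (p l : Fin n) :
    V.V ⊗[k] B →ₗ[k] (Wc.V →ₗ[k] V.V) ⊗[k] B :=
  LinearMap.rTensor B (rk Wc V bas p) ∘ₗ
    LinearMap.lTensor V.V (LinearMap.mulRight k (antipode (R := k) (mat Wc bas l p)))

@[simp] theorem Phi_tmul (p l : Fin n) (a : V.V) (b : B) :
    Phi Wc V bas p l (a ⊗ₜ[k] b)
      = rk Wc V bas p a ⊗ₜ[k] (b * antipode (R := k) (mat Wc bas l p)) := rfl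

/-- the coaction on an internal hom -/
noncomputable def rhoE : (Wc.V →ₗ[k] V.V) →ₗ[k] (Wc.V →ₗ[k] V.V) ⊗[k] B :=
  ∑ p, ∑ l, (Phi Wc V bas p l) ∘ₗ V.coaction ∘ₗ (LinearMap.applyₗ (bas l))

theorem rhoE_apply (φ : Wc.V →ₗ[k] V.V) :
    rhoE Wc V bas φ = ∑ p, ∑ l, Phi Wc V bas p l (V.coaction (φ (bas l))) := by
  simp [rhoE, LinearMap.sum_apply]

/-- counit axiom for the internal hom coaction -/
theorem rhoE_counit (φ : Wc.V →ₗ[k] V.V) :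
    (LinearMap.lTensor _ (counit (R := k))) (rhoE Wc V bas φ) = φ ⊗ₜ[k] (1 : k) := by
  rw [rhoE_apply, map_sum]
  have step : ∀ p l, (LinearMap.lTensor _ (counit (R := k)))
      (Phi Wc V bas p l (V.coaction (φ (bas l))))
      = (if l = p then (1:k) else 0) •
          LinearMap.rTensor k (rk Wc V bas p)
            ((LinearMap.lTensor V.V (counit (R := k))) (V.coaction (φ (bas l)))) := by
    intro p l
    rw [← mat_antipode_counit Wc bas l p]
    induction V.coaction (φ (bas l)) with
    | zero => simp
    | add a b ha hb => simp only [map_add, ha, hb, smul_add]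
    | tmul a b =>
      simp only [Phi_tmul, lTensor_tmul, rTensor_tmul, Bialgebra.counit_mul]
      rw [mul_comm, ← smul_eq_mul, TensorProduct.tmul_smul]
  rw [Finset.sum_congr rfl fun p _ => map_sum _ _ _]
  rw [Finset.sum_congr rfl fun p _ => Finset.sum_congr rfl fun l _ => step p l]
  simp only [ite_smul, one_smul, zero_smul]
  rw [Finset.sum_congr rfl fun p (_ : p ∈ Finset.univ) => Finset.sum_ite_eq' Finset.univ p _]
  simp only [Finset.mem_univ, if_true]
  rw [Finset.sum_congr rfl fun p (_ : p ∈ Finset.univ) => by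
    rw [V.counit_coaction (φ (bas p))]]
  simp only [rTensor_tmul]
  rw [← TensorProduct.sum_tmul, sum_rk]

end HomComod
section HomComodCoassoc

open Coalgebra LinearMap HopfAlgebra

variable {k : Type u} [Field k] {B : Type u} [CommRing B] [HopfAlgebra k B]
variable (Wc V : FdComod k B) {n : ℕ} (bas : Module.Basis (Fin n) k Wc.V)

theorem rTensor_finset_sum {M N P : Type*} [AddCommGroup M] [AddCommGroup N] [AddCommGroup P]
    [Module k M] [Module k N] [Module k P] {ι : Type*} (s : Finset ι) (F : ι → (M →ₗ[k] N))
    (u : M ⊗[k] P) :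
    LinearMap.rTensor P (∑ i ∈ s, F i) u = ∑ i ∈ s, LinearMap.rTensor P (F i) u := by
  induction u with
  | zero => simp
  | add a b ha hb => simp only [map_add, ha, hb, Finset.sum_add_distrib]
  | tmul m p => simp only [rTensor_tmul, LinearMap.sum_apply, TensorProduct.sum_tmul]

theorem rhoE_rk (p : Fin n) :
    (rhoE Wc V bas) ∘ₗ (rk Wc V bas p)
      = ∑ p', (Phi Wc V bas p' p) ∘ₗ V.coaction := by
  ext a
  rw [LinearMap.comp_apply, rhoE_apply, LinearMap.sum_apply]
  simp only [LinearMap.comp_apply]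
  refine Finset.sum_congr rfl fun p' _ => ?_
  rw [Finset.sum_congr rfl fun l (_ : l ∈ Finset.univ) => by
    rw [rk_basis Wc V bas p a l]]
  rw [Finset.sum_congr rfl (fun l (_ : l ∈ Finset.univ) => by
    rw [show Phi Wc V bas p' l (V.coaction (if l = p then a else 0))
      = if l = p then Phi Wc V bas p' l (V.coaction a) else 0 by split <;> simp]),
    Finset.sum_ite_eq' Finset.univ p _]
  simp

theorem coassoc_elem (x : V.V) :
    LinearMap.rTensor B V.coaction (V.coaction x)
      = (TensorProduct.assoc k V.V B B).symm
          (LinearMap.lTensor V.V (comul (R := k)) (V.coaction x)) := by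
  rw [LinearEquiv.eq_symm_apply]
  exact congrArg (fun F => F x) (congrArg DFunLike.coe V.coassoc)

theorem L3 (p' p : Fin n) (c : B) (s : V.V ⊗[k] (B ⊗[k] B)) :
    (TensorProduct.assoc k (Wc.V →ₗ[k] V.V) B B)
      (LinearMap.lTensor ((Wc.V →ₗ[k] V.V) ⊗[k] B) (LinearMap.mulRight k c)
        (LinearMap.rTensor B (Phi Wc V bas p' p)
          ((TensorProduct.assoc k V.V B B).symm s)))
    = TensorProduct.map (rk Wc V bas p')
        (LinearMap.mulRight k ((antipode (R := k) (mat Wc bas p p')) ⊗ₜ[k] c)) s := by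
  induction s with
  | zero => simp
  | add a b ha hb => simp only [map_add, ha, hb]
  | tmul a u =>
    induction u with
    | zero => simp
    | add a' b' ha hb => simp only [TensorProduct.tmul_add, map_add, ha, hb]
    | tmul b1 b2 =>
      simp only [TensorProduct.assoc_symm_tmul, rTensor_tmul, Phi_tmul, lTensor_tmul,
        TensorProduct.assoc_tmul, TensorProduct.map_tmul, LinearMap.mulRight_apply,
        Algebra.TensorProduct.tmul_mul_tmul]

theorem R1 (p l : Fin n) (t : V.V ⊗[k] B) :
    LinearMap.lTensor (Wc.V →ₗ[k] V.V) (comul (R := k)) (Phi Wc V bas p l t)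
      = ∑ m, TensorProduct.map (rk Wc V bas p)
          (LinearMap.mulRight k
            ((antipode (R := k) (mat Wc bas m p)) ⊗ₜ[k] (antipode (R := k) (mat Wc bas l m))))
          (LinearMap.lTensor V.V (comul (R := k)) t) := by
  induction t with
  | zero => simp
  | add a b ha hb => simp only [map_add, ha, hb, Finset.sum_add_distrib]
  | tmul a b =>
    simp only [Phi_tmul, lTensor_tmul, TensorProduct.map_tmul, LinearMap.mulRight_apply,
      Bialgebra.comul_mul, mat_antipode_comul Wc bas l p, Finset.mul_sum,
      TensorProduct.tmul_sum]

theorem map_double_sum {M N : Type*} [AddCommGroup M] [AddCommGroup N]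
    [Module k M] [Module k N] (f : M →ₗ[k] N) (g : Fin n → Fin n → M) :
    f (∑ i, ∑ j, g i j) = ∑ i, ∑ j, f (g i j) := by
  rw [map_sum]; exact Finset.sum_congr rfl fun i _ => map_sum f _ Finset.univ

theorem equiv_map_double_sum {M N : Type*} [AddCommGroup M] [AddCommGroup N]
    [Module k M] [Module k N] (f : M ≃ₗ[k] N) (g : Fin n → Fin n → M) :
    f (∑ i, ∑ j, g i j) = ∑ i, ∑ j, f (g i j) := by
  rw [map_sum]; exact Finset.sum_congr rfl fun i _ => map_sum f _ Finset.univ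

/-- coassociativity for the internal hom coaction -/
theorem rhoE_coassoc (φ : Wc.V →ₗ[k] V.V) :
    (TensorProduct.assoc k (Wc.V →ₗ[k] V.V) B B)
        (LinearMap.rTensor B (rhoE Wc V bas) (rhoE Wc V bas φ))
      = LinearMap.lTensor (Wc.V →ₗ[k] V.V) (comul (R := k)) (rhoE Wc V bas φ) := by
  have lhs_term : ∀ p l, LinearMap.rTensor B (rhoE Wc V bas)
      (Phi Wc V bas p l (V.coaction (φ (bas l))))
      = ∑ p', LinearMap.lTensor _ (LinearMap.mulRight k (antipode (R := k) (mat Wc bas l p)))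
          (LinearMap.rTensor B (Phi Wc V bas p' p)
            (LinearMap.rTensor B V.coaction (V.coaction (φ (bas l))))) := by
    intro p l
    rw [show Phi Wc V bas p l (V.coaction (φ (bas l)))
        = LinearMap.rTensor B (rk Wc V bas p)
            (LinearMap.lTensor V.V (LinearMap.mulRight k (antipode (R := k) (mat Wc bas l p)))
              (V.coaction (φ (bas l)))) from rfl]
    rw [← LinearMap.comp_apply, ← LinearMap.rTensor_comp, rhoE_rk Wc V bas p,
      rTensor_finset_sum]
    refine Finset.sum_congr rfl fun p' _ => ?_
    rw [LinearMap.rTensor_comp, LinearMap.comp_apply,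
      comm_rl V.coaction (LinearMap.mulRight k (antipode (R := k) (mat Wc bas l p)))
        (V.coaction (φ (bas l))),
      comm_rl (Phi Wc V bas p' p) (LinearMap.mulRight k (antipode (R := k) (mat Wc bas l p)))
        (LinearMap.rTensor B V.coaction (V.coaction (φ (bas l))))]
  have step : ∀ p l, (TensorProduct.assoc k (Wc.V →ₗ[k] V.V) B B)
      (LinearMap.rTensor B (rhoE Wc V bas) (Phi Wc V bas p l (V.coaction (φ (bas l)))))
      = ∑ p', TensorProduct.map (rk Wc V bas p')
          (LinearMap.mulRight k ((antipode (R := k) (mat Wc bas p p')) ⊗ₜ[k]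
            (antipode (R := k) (mat Wc bas l p))))
          (LinearMap.lTensor V.V (comul (R := k)) (V.coaction (φ (bas l)))) := by
    intro p l
    rw [lhs_term p l, map_sum (TensorProduct.assoc k (Wc.V →ₗ[k] V.V) B B) _ Finset.univ]
    refine Finset.sum_congr rfl fun p' _ => ?_
    rw [coassoc_elem V (φ (bas l))]
    exact L3 Wc V bas p' p _ _
  rw [rhoE_apply]
  simp only [map_sum]
  rw [Finset.sum_congr rfl fun p (_ : p ∈ Finset.univ) => Finset.sum_congr rfl
    fun l (_ : l ∈ Finset.univ) => step p l]
  rw [Finset.sum_congr rfl fun p (_ : p ∈ Finset.univ) => Finset.sum_congr rfl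
    fun l (_ : l ∈ Finset.univ) => R1 Wc V bas p l (V.coaction (φ (bas l)))]
  calc ∑ p : Fin n, ∑ l : Fin n, ∑ p' : Fin n,
        TensorProduct.map (rk Wc V bas p') (LinearMap.mulRight k
          ((antipode (R := k) (mat Wc bas p p')) ⊗ₜ[k] (antipode (R := k) (mat Wc bas l p))))
          (LinearMap.lTensor V.V (comul (R := k)) (V.coaction (φ (bas l))))
      = ∑ l : Fin n, ∑ p : Fin n, ∑ p' : Fin n,
        TensorProduct.map (rk Wc V bas p') (LinearMap.mulRight k
          ((antipode (R := k) (mat Wc bas p p')) ⊗ₜ[k] (antipode (R := k) (mat Wc bas l p))))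
          (LinearMap.lTensor V.V (comul (R := k)) (V.coaction (φ (bas l)))) := Finset.sum_comm
    _ = ∑ l : Fin n, ∑ p' : Fin n, ∑ p : Fin n,
        TensorProduct.map (rk Wc V bas p') (LinearMap.mulRight k
          ((antipode (R := k) (mat Wc bas p p')) ⊗ₜ[k] (antipode (R := k) (mat Wc bas l p))))
          (LinearMap.lTensor V.V (comul (R := k)) (V.coaction (φ (bas l)))) := Finset.sum_congr rfl fun l _ => Finset.sum_comm
    _ = ∑ p' : Fin n, ∑ l : Fin n, ∑ p : Fin n,
        TensorProduct.map (rk Wc V bas p') (LinearMap.mulRight k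
          ((antipode (R := k) (mat Wc bas p p')) ⊗ₜ[k] (antipode (R := k) (mat Wc bas l p))))
          (LinearMap.lTensor V.V (comul (R := k)) (V.coaction (φ (bas l)))) := Finset.sum_comm

end HomComodCoassoc
section HomComodDef

open Coalgebra LinearMap HopfAlgebra

variable {k : Type u} [Field k] {B : Type u} [CommRing B] [HopfAlgebra k B]
variable (Wc V : FdComod k B) {n : ℕ} (bas : Module.Basis (Fin n) k Wc.V)

/-- the internal hom comodule -/
noncomputable def homComod : FdComod k B where
  V := Wc.V →ₗ[k] V.V
  coaction := rhoE Wc V bas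
  counit_coaction := rhoE_counit Wc V bas
  coassoc := LinearMap.ext fun φ => by
    simpa only [LinearMap.comp_apply, LinearEquiv.coe_coe] using rhoE_coassoc Wc V bas φ

variable (R : Type u) [CommRing R] [Algebra k R]
variable (g : B →ₗ[k] R) (hg1 : g 1 = 1) (hgm : ∀ x y, g (x * y) = g x * g y)

include hgm in
theorem gmul {M : Type*} [AddCommGroup M] [Module k M] (c : B) (t : M ⊗[k] B) :
    LinearMap.lTensor M g (LinearMap.lTensor M (LinearMap.mulRight k c) t)
      = LinearMap.lTensor M (LinearMap.mulRight k (g c)) (LinearMap.lTensor M g t) := by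
  induction t with
  | zero => simp
  | add a b ha hb => simp only [map_add, ha, hb]
  | tmul m b => simp [hgm]

include hgm in
theorem gmul2 {M : Type*} [AddCommGroup M] [Module k M] (c c' : B) (t : M ⊗[k] B) :
    LinearMap.lTensor M (LinearMap.mulRight k (g c'))
        (LinearMap.lTensor M g (LinearMap.lTensor M (LinearMap.mulRight k c) t))
      = LinearMap.lTensor M g (LinearMap.lTensor M (LinearMap.mulRight k (c * c')) t) := by
  induction t with
  | zero => simp
  | add a b ha hb => simp only [map_add, ha, hb]
  | tmul m b => simp [hgm, mul_assoc]

theorem lTensor_mulRight_sum {M : Type*} [AddCommGroup M] [Module k M]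
    (cs : Fin n → B) (t : M ⊗[k] B) :
    ∑ m, LinearMap.lTensor M (LinearMap.mulRight k (cs m)) t
      = LinearMap.lTensor M (LinearMap.mulRight k (∑ m, cs m)) t := by
  induction t with
  | zero => simp
  | add a b ha hb => simp only [map_add, Finset.sum_add_distrib, ha, hb]
  | tmul m b => simp [TensorProduct.tmul_sum, Finset.mul_sum]

include hg1 hgm in
theorem fix_of_intertwine (φ : Wc.V →ₗ[k] V.V)
    (hint : ∀ w, LinearMap.lTensor V.V g (V.coaction (φ w))
      = LinearMap.rTensor R φ (LinearMap.lTensor Wc.V g (Wc.coaction w))) :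
    LinearMap.lTensor _ g (rhoE Wc V bas φ) = φ ⊗ₜ[k] (1 : R) := by
  rw [rhoE_apply]
  simp only [map_sum]
  have term : ∀ p l, LinearMap.lTensor _ g (Phi Wc V bas p l (V.coaction (φ (bas l))))
      = ∑ m, rk Wc V bas p (φ (bas m)) ⊗ₜ[k]
          (g (mat Wc bas m l * antipode (R := k) (mat Wc bas l p))) := by
    intro p l
    rw [show Phi Wc V bas p l (V.coaction (φ (bas l)))
        = LinearMap.rTensor B (rk Wc V bas p)
            (LinearMap.lTensor V.V (LinearMap.mulRight k (antipode (R := k) (mat Wc bas l p)))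
              (V.coaction (φ (bas l)))) from rfl]
    rw [← comm_rl (rk Wc V bas p) g, gmul R g hgm, hint (bas l), coaction_basis Wc bas l]
    simp only [map_sum, lTensor_tmul, rTensor_tmul, LinearMap.mulRight_apply]
    exact Finset.sum_congr rfl fun m _ => by rw [← hgm]
  rw [Finset.sum_congr rfl fun p (_ : p ∈ Finset.univ) => Finset.sum_congr rfl
    fun l (_ : l ∈ Finset.univ) => term p l]
  rw [show (∑ p : Fin n, ∑ l : Fin n, ∑ m : Fin n, rk Wc V bas p (φ (bas m)) ⊗ₜ[k]
          (g (mat Wc bas m l * antipode (R := k) (mat Wc bas l p))))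
      = ∑ p : Fin n, ∑ m : Fin n, ∑ l : Fin n, rk Wc V bas p (φ (bas m)) ⊗ₜ[k]
          (g (mat Wc bas m l * antipode (R := k) (mat Wc bas l p)))
    from Finset.sum_congr rfl fun p _ => Finset.sum_comm]
  have inner : ∀ p m, (∑ l, rk Wc V bas p (φ (bas m)) ⊗ₜ[k]
      (g (mat Wc bas m l * antipode (R := k) (mat Wc bas l p))))
      = if m = p then rk Wc V bas p (φ (bas m)) ⊗ₜ[k] (1 : R) else 0 := by
    intro p m
    rw [← TensorProduct.tmul_sum, ← map_sum, mat_mul_antipode Wc bas m p]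
    split
    · rw [hg1]
    · rw [map_zero, TensorProduct.tmul_zero]
  rw [Finset.sum_congr rfl fun p (_ : p ∈ Finset.univ) => Finset.sum_congr rfl
    fun m (_ : m ∈ Finset.univ) => inner p m]
  rw [Finset.sum_congr rfl fun p (_ : p ∈ Finset.univ) =>
    Finset.sum_ite_eq' Finset.univ p _]
  simp only [Finset.mem_univ, if_true]
  rw [← TensorProduct.sum_tmul, sum_rk]

include hg1 hgm in
theorem intertwine_of_fix (φ : Wc.V →ₗ[k] V.V)
    (hfix : LinearMap.lTensor _ g (rhoE Wc V bas φ) = φ ⊗ₜ[k] (1 : R)) :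
    ∀ w, LinearMap.lTensor V.V g (V.coaction (φ w))
      = LinearMap.rTensor R φ (LinearMap.lTensor Wc.V g (Wc.coaction w)) := by
  classical
  have hC : ∀ m, ∑ l, LinearMap.lTensor V.V g (LinearMap.lTensor V.V
      (LinearMap.mulRight k (antipode (R := k) (mat Wc bas l m)))
        (V.coaction (φ (bas l)))) = φ (bas m) ⊗ₜ[k] (1 : R) := by
    intro m
    have h := congrArg (LinearMap.rTensor R (LinearMap.applyₗ (M₂ := V.V) (bas m))) hfix
    rw [rhoE_apply] at h
    simp only [map_sum] at h
    have ev_rk : ∀ p, (LinearMap.applyₗ (M₂ := V.V) (bas m)) ∘ₗ rk Wc V bas p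
        = if m = p then LinearMap.id else 0 := by
      intro p
      ext a
      have e1 : ((LinearMap.applyₗ (M₂ := V.V) (bas m)) ∘ₗ rk Wc V bas p) a
          = rk Wc V bas p a (bas m) := rfl
      rw [e1, rk_basis]
      by_cases hmp : m = p
      · subst hmp; simp
      · simp [hmp]
    have term : ∀ p l, LinearMap.rTensor R (LinearMap.applyₗ (M₂ := V.V) (bas m))
        (LinearMap.lTensor _ g (Phi Wc V bas p l (V.coaction (φ (bas l)))))
        = if m = p then LinearMap.lTensor V.V g (LinearMap.lTensor V.V
            (LinearMap.mulRight k (antipode (R := k) (mat Wc bas l p)))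
              (V.coaction (φ (bas l)))) else 0 := by
      intro p l
      rw [show Phi Wc V bas p l (V.coaction (φ (bas l)))
          = LinearMap.rTensor B (rk Wc V bas p)
              (LinearMap.lTensor V.V (LinearMap.mulRight k (antipode (R := k) (mat Wc bas l p)))
                (V.coaction (φ (bas l)))) from rfl]
      rw [← comm_rl (rk Wc V bas p) g, ← LinearMap.comp_apply (LinearMap.rTensor R _),
        ← LinearMap.rTensor_comp, ev_rk p]
      split
      · rw [LinearMap.rTensor_id]; rfl
      · rw [LinearMap.rTensor_zero]
        rfl
    rw [Finset.sum_congr rfl fun p (_ : p ∈ Finset.univ) => Finset.sum_congr rfl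
      fun l (_ : l ∈ Finset.univ) => term p l] at h
    rw [Finset.sum_congr rfl fun p (_ : p ∈ Finset.univ) =>
      (show (∑ l, if m = p then LinearMap.lTensor V.V g (LinearMap.lTensor V.V
          (LinearMap.mulRight k (antipode (R := k) (mat Wc bas l p)))
            (V.coaction (φ (bas l)))) else 0)
        = if m = p then ∑ l, LinearMap.lTensor V.V g (LinearMap.lTensor V.V
            (LinearMap.mulRight k (antipode (R := k) (mat Wc bas l p)))
              (V.coaction (φ (bas l)))) else 0 by split <;> simp),
      Finset.sum_ite_eq] at h
    simpa using h
  have key : ∀ p, LinearMap.lTensor V.V g (V.coaction (φ (bas p)))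
      = ∑ m, φ (bas m) ⊗ₜ[k] (g (mat Wc bas m p)) := by
    intro p
    have h3 : ∑ m, LinearMap.lTensor V.V (LinearMap.mulRight k (g (mat Wc bas m p)))
        (∑ l, LinearMap.lTensor V.V g (LinearMap.lTensor V.V
          (LinearMap.mulRight k (antipode (R := k) (mat Wc bas l m)))
            (V.coaction (φ (bas l)))))
        = ∑ m, LinearMap.lTensor V.V (LinearMap.mulRight k (g (mat Wc bas m p)))
            (φ (bas m) ⊗ₜ[k] (1 : R)) :=
      Finset.sum_congr rfl fun m _ => congrArg _ (hC m)
    rw [Finset.sum_congr rfl fun m (_ : m ∈ Finset.univ) => map_sum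
      (LinearMap.lTensor V.V (LinearMap.mulRight k (g (mat Wc bas m p)))) _ Finset.univ] at h3
    rw [Finset.sum_congr rfl fun m (_ : m ∈ Finset.univ) => Finset.sum_congr rfl
      fun l (_ : l ∈ Finset.univ) => gmul2 R g hgm _ _ _] at h3
    rw [Finset.sum_comm] at h3
    rw [Finset.sum_congr rfl fun l (_ : l ∈ Finset.univ) =>
      (map_sum (LinearMap.lTensor V.V g) _ Finset.univ).symm] at h3
    rw [Finset.sum_congr rfl fun l (_ : l ∈ Finset.univ) => congrArg (LinearMap.lTensor V.V g)
      (lTensor_mulRight_sum _ _)] at h3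
    rw [Finset.sum_congr rfl fun l (_ : l ∈ Finset.univ) => by
      rw [mat_antipode_mul Wc bas l p]] at h3
    have collapse : ∀ l : Fin n, LinearMap.lTensor V.V g (LinearMap.lTensor V.V
        (LinearMap.mulRight k (if l = p then (1:B) else 0)) (V.coaction (φ (bas l))))
        = if l = p then LinearMap.lTensor V.V g (V.coaction (φ (bas l))) else 0 := by
      intro l
      split
      · rw [LinearMap.mulRight_one, LinearMap.lTensor_id, LinearMap.id_apply]
      · rw [show LinearMap.mulRight k (0:B) = 0 from LinearMap.ext fun x => mul_zero x,
          LinearMap.lTensor_zero, LinearMap.zero_apply, map_zero]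
    rw [Finset.sum_congr rfl fun l (_ : l ∈ Finset.univ) => collapse l,
      Finset.sum_ite_eq' Finset.univ p _] at h3
    simp only [Finset.mem_univ, if_true] at h3
    rw [h3]
    refine Finset.sum_congr rfl fun m _ => ?_
    rw [LinearMap.lTensor_tmul, LinearMap.mulRight_apply, one_mul]
  intro w
  conv_lhs => rw [← Module.Basis.sum_repr bas w]
  conv_rhs => rw [← Module.Basis.sum_repr bas w]
  rw [map_sum, map_sum, map_sum, map_sum, map_sum, map_sum]
  refine Finset.sum_congr rfl fun p _ => ?_
  simp only [map_smul]
  rw [key p, coaction_basis Wc bas p, map_sum, map_sum]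
  simp only [LinearMap.lTensor_tmul, LinearMap.rTensor_tmul]

end HomComodDef
section Factor

variable {k : Type u} [Field k]

theorem exists_factor_functional {W M : Type u} [AddCommGroup W] [Module k W]
    [AddCommGroup M] [Module k M] (v : W →ₗ[k] M) (ξ : W →ₗ[k] k)
    (h : ∀ w, v w = 0 → ξ w = 0) : ∃ θ : M →ₗ[k] k, ∀ w, θ (v w) = ξ w := by
  obtain ⟨s, hs⟩ := v.rangeRestrict.exists_rightInverse_of_surjective
    (LinearMap.range_eq_top.2 v.surjective_rangeRestrict)
  obtain ⟨P, hP⟩ := (LinearMap.range v).subtype.exists_leftInverse_of_injective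
    (Submodule.ker_subtype _)
  refine ⟨ξ ∘ₗ s ∘ₗ P, fun w => ?_⟩
  have h1 : P (v w) = v.rangeRestrict w := by
    have : v w = (LinearMap.range v).subtype (v.rangeRestrict w) := rfl
    rw [this, ← LinearMap.comp_apply, hP, LinearMap.id_apply]
  have h2 : v (s (v.rangeRestrict w)) = v w := by
    have h3 : v.rangeRestrict (s (v.rangeRestrict w)) = v.rangeRestrict w :=
      LinearMap.congr_fun hs (v.rangeRestrict w)
    have h4 := congrArg ((LinearMap.range v).subtype) h3
    exact h4
  have h5 : v (s (v.rangeRestrict w) - w) = 0 := by rw [map_sub, h2, sub_self]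
  have h6 := h _ h5
  rw [map_sub] at h6
  simp only [LinearMap.comp_apply, h1]
  exact sub_eq_zero.mp h6

end Factor

section MainAux

open Coalgebra LinearMap HopfAlgebra

variable {k B C : Type u} [Field k] [CommRing B] [CommRing C]
    [HopfAlgebra k B] [HopfAlgebra k C] (π : B →ₐc[k] C)

theorem main_aux (hobs : ∀ Wq : FdComod k C, ∃ (V : FdComod k B) (f : Wq.V →ₗ[k] V.V),
      Function.Injective f ∧
        ((LinearMap.lTensor V.V π.toLinearMap) ∘ₗ V.coaction) ∘ₗ f =
          (LinearMap.rTensor C f) ∘ₗ Wq.coaction)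
    (b : B) (hb : π b = 0) :
    ∃ (V : FdComod k B) (v : V.V),
      (LinearMap.lTensor V.V π.toLinearMap (V.coaction v) = v ⊗ₜ[k] (1 : C)) ∧
      ∀ (R : Type u) [CommRing R] [Algebra k R] (g : B →ₐ[k] R),
        LinearMap.lTensor V.V g.toLinearMap (V.coaction v) = v ⊗ₜ[k] (1 : R) → g b = 0 := by
  classical
  obtain ⟨W, hbW, hfd, hW⟩ := exists_subcomodule (k := k) b
  let Wc : FdComod k B := subComod W hW
  let bas : Module.Basis (Fin (Module.finrank k ↥W)) k Wc.V := Module.finBasis k ↥W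
  -- the image of W in C
  let Q : Submodule k C := W.map π.toLinearMap
  haveI : FiniteDimensional k ↥Q := inferInstance
  have hmemQ : ∀ w : ↥W, π.toLinearMap (W.subtype w) ∈ Q := fun w => ⟨↑w, w.2, rfl⟩
  let qbar : ↥W →ₗ[k] ↥Q := LinearMap.codRestrict Q (π.toLinearMap ∘ₗ W.subtype) hmemQ
  have hsub_qbar : Q.subtype ∘ₗ qbar = π.toLinearMap ∘ₗ W.subtype :=
    LinearMap.subtype_comp_codRestrict _ _ _
  have hQ : ∀ q ∈ Q, comul (R := k) q ∈ LinearMap.range (rTensor C Q.subtype) := by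
    rintro q ⟨w, hwW, rfl⟩
    obtain ⟨t, ht⟩ := hW w hwW
    refine ⟨TensorProduct.map qbar π.toLinearMap t, ?_⟩
    have hc : comul (R := k) (π.toLinearMap w)
        = TensorProduct.map π.toLinearMap π.toLinearMap (comul (R := k) w) :=
      (LinearMap.congr_fun (CoalgHomClass.map_comp_comul π) w).symm
    rw [hc, ← ht]
    rw [← LinearMap.comp_apply, ← LinearMap.comp_apply]
    refine LinearMap.congr_fun ?_ t
    ext w' x
    simp only [LinearMap.comp_apply, TensorProduct.map_tmul, rTensor_tmul,
      TensorProduct.AlgebraTensorModule.curry_apply, TensorProduct.curry_apply,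
      LinearMap.coe_restrictScalars]
    rfl
  let Qc : FdComod k C := subComod Q hQ
  obtain ⟨M, f, hfinj, hcompat⟩ := hobs Qc
  -- relation between the coaction of Q and that of W
  have hQW : ∀ w : Wc.V, Qc.coaction (qbar w)
      = rTensor C qbar (lTensor ↥W π.toLinearMap (Wc.coaction w)) := by
    intro w
    apply rTensor_inj (retr_subtype Q) (X := C)
    rw [subComod_key_apply Q hQ (qbar w)]
    rw [← LinearMap.comp_apply (rTensor C Q.subtype), ← LinearMap.rTensor_comp, hsub_qbar,
      LinearMap.rTensor_comp, LinearMap.comp_apply,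
      comm_rl W.subtype π.toLinearMap (Wc.coaction w), subComod_key_apply W hW w]
    rw [← LinearMap.comp_apply (rTensor C π.toLinearMap), LinearMap.rTensor_comp_lTensor]
    exact (LinearMap.congr_fun (CoalgHomClass.map_comp_comul π) ((W.subtype) w)).symm
  let v : Wc.V →ₗ[k] M.V := f ∘ₗ qbar
  have hint_π : ∀ w : Wc.V, LinearMap.lTensor M.V π.toLinearMap (M.coaction (v w))
      = LinearMap.rTensor C v (LinearMap.lTensor Wc.V π.toLinearMap (Wc.coaction w)) := by
    intro w
    have h1 : LinearMap.lTensor M.V π.toLinearMap (M.coaction (f (qbar w)))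
        = LinearMap.rTensor C f (Qc.coaction (qbar w)) := LinearMap.congr_fun hcompat (qbar w)
    show LinearMap.lTensor M.V π.toLinearMap (M.coaction (f (qbar w))) = _
    rw [h1, hQW w]
    show LinearMap.rTensor C f ((LinearMap.rTensor C qbar)
        ((LinearMap.lTensor (↥W) π.toLinearMap) (Wc.coaction w)))
      = LinearMap.rTensor C (f ∘ₗ qbar) ((LinearMap.lTensor Wc.V π.toLinearMap) (Wc.coaction w))
    exact (LinearMap.congr_fun (LinearMap.rTensor_comp C f qbar) _).symm
  refine ⟨homComod Wc M bas, v, ?_, ?_⟩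
  · exact fix_of_intertwine Wc M bas C π.toLinearMap (map_one π) (map_mul π) v hint_π
  · intro R _ _ g hfix
    have hint_g := intertwine_of_fix Wc M bas R g.toLinearMap (map_one g) (map_mul g) v hfix
    set wb : Wc.V := (⟨b, hbW⟩ : ↥W) with hwb
    have hv0 : v wb = 0 := by
      have : qbar wb = 0 := by
        apply Subtype.ext
        show π.toLinearMap (W.subtype wb) = 0
        exact hb
      show f (qbar wb) = 0
      rw [this]; exact map_zero f
    have h0 : LinearMap.rTensor R v (LinearMap.lTensor Wc.V g.toLinearMap (Wc.coaction wb))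
        = 0 := by
      rw [← hint_g wb, hv0, map_zero, map_zero]
    have hker : ∀ w : Wc.V, v w = 0 → ((counit (R := k)) ∘ₗ W.subtype) w = 0 := by
      intro w hvw
      have hq0 : qbar w = 0 := hfinj (hvw.trans (map_zero f).symm)
      have hπ0 : π.toLinearMap (W.subtype w) = 0 := by
        have := congrArg Q.subtype hq0
        exact (LinearMap.congr_fun hsub_qbar w).symm.trans (this.trans (map_zero _))
      have h8 : counit (R := k) (π.toLinearMap (W.subtype w))
          = counit (R := k) (W.subtype w) := CoalgHomClass.counit_comp_apply π (W.subtype w)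
      show counit (R := k) (W.subtype w) = 0
      rw [← h8, hπ0, map_zero]
    obtain ⟨θ, hθ⟩ := exists_factor_functional v ((counit (R := k)) ∘ₗ W.subtype) hker
    have h1 : (TensorProduct.lid k R) (LinearMap.rTensor R θ
        (LinearMap.rTensor R v (LinearMap.lTensor Wc.V g.toLinearMap (Wc.coaction wb)))) = 0 := by
      rw [h0, map_zero, map_zero]
    have h2 : ∀ t : Wc.V ⊗[k] B, (TensorProduct.lid k R) (LinearMap.rTensor R θ
        (LinearMap.rTensor R v (LinearMap.lTensor Wc.V g.toLinearMap t)))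
        = (TensorProduct.lid k R) (LinearMap.lTensor k g.toLinearMap
            (LinearMap.rTensor B ((counit (R := k)) ∘ₗ W.subtype) t)) := by
      intro t
      induction t with
      | zero => erw [map_zero]
      | add a c ha hc => erw [map_add, map_add, map_add, map_add, map_add, map_add, map_add]; exact congrArg₂ (· + ·) ha hc
      | tmul w x =>
        simp only [lTensor_tmul, rTensor_tmul, TensorProduct.lid_tmul]
        rw [hθ w]
        rfl
    have h3 : LinearMap.rTensor B ((counit (R := k)) ∘ₗ W.subtype) (Wc.coaction wb)
        = (1 : k) ⊗ₜ[k] b := by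
      exact (LinearMap.congr_fun (LinearMap.rTensor_comp B (counit (R := k)) W.subtype) _).trans
        ((congrArg (rTensor B (counit (R := k))) (subComod_key_apply W hW wb)).trans
        (by rw [Coalgebra.rTensor_counit_comul]))
    have h4 := h2 (Wc.coaction wb)
    rw [h1, h3] at h4
    simp only [lTensor_tmul, TensorProduct.lid_tmul, one_smul] at h4
    exact h4.symm

end MainAux
section Final

open Coalgebra LinearMap HopfAlgebra

variable {k : Type u} [Field k] {B : Type u} [CommRing B] [HopfAlgebra k B]

variable (k B) in
/-- the trivial one-dimensional comodule -/
noncomputable def triv : FdComod k B where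
  V := k
  coaction := (TensorProduct.mk k k B).flip 1
  counit_coaction := fun x => by
    simp only [LinearMap.flip_apply, TensorProduct.mk_apply, lTensor_tmul, Bialgebra.counit_one]
  coassoc := by
    ext x
    simp only [LinearMap.comp_apply, LinearMap.flip_apply, TensorProduct.mk_apply,
      rTensor_tmul, lTensor_tmul, LinearEquiv.coe_coe, TensorProduct.assoc_tmul,
      Bialgebra.comul_one, Algebra.TensorProduct.one_def]

end Final

/-- Let `H ≤ G` be affine group schemes over `k`, with `H` the closed subgroup
given by a surjection of Hopf algebras `π : 𝒪(G) → 𝒪(H)`.  If every finite-dimensional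
representation of `H` embeds equivariantly into the restriction of a finite-dimensional
representation of `G`, then `H` is the intersection of a family of stabilizers `G_v` of
vectors `v` in finite-dimensional `G`-representations: there are `G`-comodules `Vᵢ` with
vectors `vᵢ` such that for every commutative `k`-algebra `R`, a point `g ∈ G(R)` lies in
`H(R)` (i.e. kills `ker π`) iff it fixes each `1 ⊗ vᵢ` in `R ⊗ Vᵢ`. -/
theorem stmt_18 {k B C : Type u} [Field k] [CommRing B] [CommRing C]
    [HopfAlgebra k B] [HopfAlgebra k C] (π : B →ₐc[k] C)
    (hπ : Function.Surjective π)
    (hobs : ∀ W : FdComod k C, ∃ (V : FdComod k B) (f : W.V →ₗ[k] V.V),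
      Function.Injective f ∧
        ((LinearMap.lTensor V.V π.toLinearMap) ∘ₗ V.coaction) ∘ₗ f =
          (LinearMap.rTensor C f) ∘ₗ W.coaction) :
    ∃ (ι : Type u) (Vfam : ι → FdComod k B) (v : ∀ i, (Vfam i).V),
      ∀ (R : Type u) [CommRing R] [Algebra k R] (g : B →ₐ[k] R),
        ((∀ b : B, π b = 0 → g b = 0) ↔
          ∀ i, (LinearMap.lTensor (Vfam i).V g.toLinearMap) ((Vfam i).coaction (v i)) =
            (v i) ⊗ₜ[k] (1 : R)) := by
  classical
  have H : ∀ b : B, ∃ (V : FdComod k B) (v : V.V),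
      (LinearMap.lTensor V.V π.toLinearMap (V.coaction v) = v ⊗ₜ[k] (1 : C)) ∧
      (π b = 0 → ∀ (R : Type u) [CommRing R] [Algebra k R] (g : B →ₐ[k] R),
        LinearMap.lTensor V.V g.toLinearMap (V.coaction v) = v ⊗ₜ[k] (1 : R) → g b = 0) := by
    intro b
    by_cases hb : π b = 0
    · obtain ⟨V, v, h1, h2⟩ := main_aux π hobs b hb
      exact ⟨V, v, h1, fun _ => h2⟩
    · refine ⟨triv k B, 0, ?_, fun h => absurd h hb⟩
      rw [map_zero, map_zero, TensorProduct.zero_tmul]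
  choose Vfam v h1 h2 using H
  refine ⟨B, Vfam, v, ?_⟩
  intro R _ _ g
  constructor
  · intro hg i
    obtain ⟨s, hs⟩ := π.toLinearMap.exists_rightInverse_of_surjective
      (LinearMap.range_eq_top.2 hπ)
    have hfac : g.toLinearMap = (g.toLinearMap ∘ₗ s) ∘ₗ π.toLinearMap := by
      ext x
      have hx : π.toLinearMap (s (π.toLinearMap x) - x) = 0 := by
        rw [map_sub]
        have h9 : π.toLinearMap (s (π.toLinearMap x)) = π.toLinearMap x :=
          LinearMap.congr_fun hs (π.toLinearMap x)
        rw [h9, sub_self]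
      have := hg _ hx
      simp only [AlgHom.toLinearMap_apply] at this ⊢
      simp only [LinearMap.comp_apply]
      rw [map_sub] at this
      have := sub_eq_zero.mp this
      rw [← this]
      rfl
    rw [hfac, LinearMap.lTensor_comp, LinearMap.comp_apply, h1 i, LinearMap.lTensor_tmul]
    have hs1 : g (s 1) = 1 := by
      have hx : π.toLinearMap (s 1 - 1) = 0 := by
        rw [map_sub]
        have h9 : π.toLinearMap (s 1) = (1 : C) := LinearMap.congr_fun hs 1
        rw [h9]
        have h10 : π.toLinearMap (1 : B) = (1 : C) := map_one π
        rw [h10, sub_self]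
      have := hg _ hx
      rw [map_sub] at this
      have := sub_eq_zero.mp this
      rw [this, map_one]
    show v i ⊗ₜ[k] (g (s 1)) = v i ⊗ₜ[k] 1
    rw [hs1]
  · intro hfix b hb
    exact h2 b hb R g (hfix b)
end
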